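/- arXiv:2205.00464 — 10 statements merged into one kernel-verified Lean document; each statement's English description precedes it below -/
import Mathlib

section
/- There do not exist complex numbers x₁, x₂ and complex numbers z₁, z₂ with rational real and imaginary parts and |z₁| = |z₂| = 1 such that x₁·z₁^j + x₂·z₂^j = (−2)^j/(j+1)! for every integer j with 0 ≤ j ≤ 2. (Equivalently: there is no quadrature formula of degree 2 for the Bessel weight with 2 nodes on ℚ(√−1) ∩ S¹.) -/
lemma aux_M (A B : ℤ) (h : (3:ℤ) ∣ A^2 + B^2) : (3:ℤ) ∣ A ∧ (3:ℤ) ∣ B := by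
  have h3 : ((A:ZMod 3))^2 + (B:ZMod 3)^2 = 0 := by
    have := (ZMod.intCast_zmod_eq_zero_iff_dvd (A^2+B^2) 3).2 h
    push_cast at this
    exact this
  have key : ∀ a b : ZMod 3, a^2 + b^2 = 0 → a = 0 ∧ b = 0 := by decide
  obtain ⟨hA, hB⟩ := key _ _ h3
  exact ⟨(ZMod.intCast_zmod_eq_zero_iff_dvd A 3).1 hA,
         (ZMod.intCast_zmod_eq_zero_iff_dvd B 3).1 hB⟩

lemma aux_S : ∀ (k : ℕ) (A B n : ℤ), A^2 + B^2 = n^2 → (3:ℤ)^k ∣ n →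
    (3:ℤ)^k ∣ A ∧ (3:ℤ)^k ∣ B := by
  intro k
  induction k with
  | zero => intro A B n _ _; simp
  | succ k ih =>
    intro A B n h hd
    obtain ⟨n', hn'⟩ : (3:ℤ) ∣ n := dvd_trans (dvd_pow_self 3 (Nat.succ_ne_zero k)) hd
    have h3 : (3:ℤ) ∣ A^2 + B^2 := by
      rw [h, hn']; exact ⟨3*n'^2, by ring⟩
    obtain ⟨⟨A', hA'⟩, ⟨B', hB'⟩⟩ := aux_M A B h3
    have heq : A'^2 + B'^2 = n'^2 := by
      have h9 : (3*A')^2 + (3*B')^2 = (3*n')^2 := by rw [← hA', ← hB', ← hn']; exact h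
      nlinarith [h9]
    have hd' : (3:ℤ)^k ∣ n' := by
      obtain ⟨c, hc⟩ := hd
      refine ⟨c, ?_⟩
      have : (3:ℤ) * n' = 3 * (3^k * c) := by rw [← hn', hc]; ring
      linarith
    obtain ⟨⟨a, ha⟩, ⟨b, hb⟩⟩ := ih A' B' n' heq hd'
    exact ⟨⟨a, by rw [hA', ha, pow_succ]; ring⟩, ⟨b, by rw [hB', hb, pow_succ]; ring⟩⟩

lemma aux_num (a : ℚ) : (a.num : ℚ) = a * (a.den : ℚ) := by
  have hd : ((a.den : ℚ)) ≠ 0 := by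
    exact_mod_cast a.den_nz
  exact (div_eq_iff hd).1 (Rat.num_div_den a)

lemma aux_den (a b : ℚ) (h : a^2 + b^2 = 1) : ¬ (3 ∣ a.den) := by
  intro hdvd
  have hident : (a.num * (b.den:ℤ))^2 + (b.num * (a.den:ℤ))^2 = ((a.den:ℤ) * (b.den:ℤ))^2 := by
    have hq : ((a.num * (b.den:ℤ))^2 + (b.num * (a.den:ℤ))^2 : ℚ)
        = (((a.den:ℤ) * (b.den:ℤ))^2 : ℚ) := by
      push_cast
      rw [aux_num a, aux_num b]
      linear_combination ((a.den:ℚ)^2 * (b.den:ℚ)^2) * h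
    exact_mod_cast hq
  set k₁ := (a.den).factorization 3 with hk₁
  set k₂ := (b.den).factorization 3 with hk₂
  have hden_a : a.den ≠ 0 := a.den_nz
  have hden_b : b.den ≠ 0 := b.den_nz
  have hp3 : Nat.Prime 3 := Nat.prime_three
  have hk₁pos : 1 ≤ k₁ := by
    have h1 : 3^1 ∣ a.den := by simpa using hdvd
    exact (Nat.Prime.pow_dvd_iff_le_factorization hp3 hden_a).1 h1
  have hdvd_n : (3:ℤ)^(k₁+k₂) ∣ ((a.den:ℤ) * (b.den:ℤ)) := by
    have h1 : 3^k₁ ∣ a.den := (Nat.Prime.pow_dvd_iff_le_factorization hp3 hden_a).2 le_rfl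
    have h2 : 3^k₂ ∣ b.den := (Nat.Prime.pow_dvd_iff_le_factorization hp3 hden_b).2 le_rfl
    have : 3^(k₁+k₂) ∣ a.den * b.den := by rw [pow_add]; exact mul_dvd_mul h1 h2
    exact_mod_cast Int.natCast_dvd_natCast.2 this
  obtain ⟨hA, -⟩ := aux_S (k₁+k₂) _ _ _ hident hdvd_n
  -- 3^(k₁+k₂) ∣ a.num * b.den, but 3 ∤ a.num
  have hnum : ¬ (3 ∣ a.num.natAbs) := by
    intro h3n
    have hcop : Nat.Coprime a.num.natAbs a.den := a.reduced
    have : 3 ∣ Nat.gcd a.num.natAbs a.den := Nat.dvd_gcd h3n hdvd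
    rw [hcop] at this
    omega
  have hAnat : 3^(k₁+k₂) ∣ a.num.natAbs * b.den := by
    have := Int.natAbs_dvd_natAbs.2 hA
    simpa [Int.natAbs_mul, Int.natAbs_pow] using this
  have hcop3 : Nat.Coprime (3^(k₁+k₂)) a.num.natAbs :=
    Nat.Coprime.pow_left _ ((Nat.Prime.coprime_iff_not_dvd hp3).2 hnum)
  have hbden : 3^(k₁+k₂) ∣ b.den := (Nat.Coprime.dvd_of_dvd_mul_left hcop3 hAnat)
  have : k₁ + k₂ ≤ k₂ := (Nat.Prime.pow_dvd_iff_le_factorization hp3 hden_b).1 hbden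
  omega

lemma aux_rat (a₁ b₁ a₂ b₂ : ℚ) (h₁ : a₁^2 + b₁^2 = 1) (h₂ : a₂^2 + b₂^2 = 1)
    (hsum : a₁*a₂ - b₁*b₂ + a₁ + a₂ + 2/3 = 0) : False := by
  have hn₁ := aux_den a₁ b₁ h₁
  have hm₁ := aux_den b₁ a₁ (by linarith)
  have hn₂ := aux_den a₂ b₂ h₂
  have hm₂ := aux_den b₂ a₂ (by linarith)
  set K : ℤ := a₁.num * a₂.num * (b₁.den * b₂.den) - b₁.num * b₂.num * (a₁.den * a₂.den)
      + a₁.num * (a₂.den * b₁.den * b₂.den) + a₂.num * (a₁.den * b₁.den * b₂.den) with hK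
  set N : ℕ := a₁.den * a₂.den * b₁.den * b₂.den with hN
  have hKQ : (K : ℚ) = (a₁*a₂ - b₁*b₂ + a₁ + a₂) * (N : ℚ) := by
    rw [hK, hN]
    push_cast
    rw [aux_num a₁, aux_num a₂, aux_num b₁, aux_num b₂]
    ring
  have hKQ2 : (3 * K : ℚ) = (-2 * N : ℚ) := by
    rw [hKQ]
    have : a₁*a₂ - b₁*b₂ + a₁ + a₂ = -2/3 := by linarith
    rw [this]; ring
  have hKZ : (3 : ℤ) * K = -2 * (N : ℤ) := by exact_mod_cast hKQ2
  have h3N : (3:ℤ) ∣ 2 * (N:ℤ) := ⟨-K, by linarith⟩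
  have h3Nnat : 3 ∣ 2 * N := by exact_mod_cast Int.natCast_dvd_natCast.1 (by exact_mod_cast h3N)
  have hp3 : Nat.Prime 3 := Nat.prime_three
  have h3N' : 3 ∣ N := by
    rcases (Nat.Prime.dvd_mul hp3).1 h3Nnat with h | h
    · omega
    · exact h
  rw [hN] at h3N'
  rcases (Nat.Prime.dvd_mul hp3).1 h3N' with h | h
  · rcases (Nat.Prime.dvd_mul hp3).1 h with h' | h'
    · rcases (Nat.Prime.dvd_mul hp3).1 h' with h'' | h''
      · exact hn₁ h''
      · exact hn₂ h''
    · exact hm₁ h'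
  · exact hm₂ h

/-- There is no quadrature formula of degree 2 for the Bessel weight with 2 nodes
on `ℚ(√-1) ∩ S¹`. -/
theorem no_bessel_quadrature_deg2_two_nodes :
    ¬ ∃ (x₁ x₂ z₁ z₂ : ℂ),
      (∃ a b : ℚ, z₁ = (a : ℂ) + (b : ℂ) * Complex.I) ∧
      (∃ a b : ℚ, z₂ = (a : ℂ) + (b : ℂ) * Complex.I) ∧
      ‖z₁‖ = 1 ∧ ‖z₂‖ = 1 ∧
      (∀ j : ℕ, j ≤ 2 →
        x₁ * z₁ ^ j + x₂ * z₂ ^ j = (-2 : ℂ) ^ j / (Nat.factorial (j + 1) : ℂ)) := by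
  rintro ⟨x₁, x₂, z₁, z₂, ⟨a₁, b₁, hz₁⟩, ⟨a₂, b₂, hz₂⟩, habs₁, habs₂, h⟩
  have e0 := h 0 (by norm_num)
  have e1 := h 1 (by norm_num)
  have e2 := h 2 (by norm_num)
  norm_num [Nat.factorial] at e0 e1 e2
  -- key complex identity
  have key : z₁ * z₂ + (z₁ + z₂) + 2/3 = 0 := by
    linear_combination (-1 : ℂ) * e2 + (z₁ + z₂) * e1 - (z₁ * z₂) * e0
  -- unit circle conditions
  have hq₁ : a₁^2 + b₁^2 = 1 := by
    have h1 : Complex.normSq z₁ = 1 := by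
      rw [← Complex.sq_norm, habs₁]; norm_num
    rw [hz₁] at h1
    simp [Complex.normSq_apply] at h1
    have : (a₁:ℝ)^2 + (b₁:ℝ)^2 = 1 := by
      nlinarith [h1]
    exact_mod_cast this
  have hq₂ : a₂^2 + b₂^2 = 1 := by
    have h1 : Complex.normSq z₂ = 1 := by
      rw [← Complex.sq_norm, habs₂]; norm_num
    rw [hz₂] at h1
    simp [Complex.normSq_apply] at h1
    have : (a₂:ℝ)^2 + (b₂:ℝ)^2 = 1 := by
      nlinarith [h1]
    exact_mod_cast this
  -- take real part of key
  rw [hz₁, hz₂] at key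
  have hre := congrArg Complex.re key
  simp [Complex.add_re, Complex.mul_re, Complex.mul_im, Complex.I_re, Complex.I_im,
    Complex.ofReal_re, Complex.ofReal_im, Complex.div_re] at hre
  have hsum : a₁*a₂ - b₁*b₂ + a₁ + a₂ + 2/3 = 0 := by
    have hR : (a₁:ℝ)*a₂ - b₁*b₂ + a₁ + a₂ = -2/3 := by
      nlinarith [hre]
    have hQ : a₁*a₂ - b₁*b₂ + a₁ + a₂ = -2/3 := by exact_mod_cast hR
    linarith
  exact aux_rat a₁ b₁ a₂ b₂ hq₁ hq₂ hsum
end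

section
/- There do not exist complex numbers x₁, x₂, x₃ and pairwise distinct complex numbers z₁, z₂, z₃, each with rational real and imaginary parts and of modulus 1, such that ∑_{i=1}^{3} x_i·z_i^j = (−2)^j/(j+1)! for every integer j with 0 ≤ j ≤ 4. (Equivalently: there is no quadrature formula of degree 4 for the Bessel weight with 3 nodes on ℚ(√−1) ∩ S¹.) -/
lemma rat_sq_ne_nonsquare_nat (q : ℚ) (n : ℕ) (hn : ¬ IsSquare n) (h : q ^ 2 = n) :
    False := by
  have : IsSquare ((n : ℕ) : ℚ) := ⟨q, by rw [← h]; ring⟩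
  rw [Rat.isSquare_natCast_iff] at this
  exact hn this

lemma not_isSquare_501 : ¬ IsSquare (501 : ℕ) := by
  rintro ⟨r, hr⟩
  rcases le_or_gt r 22 with h | h <;> nlinarith

lemma not_isSquare_141 : ¬ IsSquare (141 : ℕ) := by
  rintro ⟨r, hr⟩
  rcases le_or_gt r 11 with h | h <;> nlinarith

open Finset in
/-- There is no quadrature formula of degree 4 for the Bessel weight with 3 nodes
on `ℚ(√-1) ∩ S¹`. -/
theorem no_bessel_quadrature_deg4_three_nodes_on_QiS1 :
    ¬ ∃ (x z : Fin 3 → ℂ),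
      Function.Injective z ∧
      (∀ i, ∃ a b : ℚ, z i = (a : ℂ) + (b : ℂ) * Complex.I) ∧
      (∀ i, ‖z i‖ = 1) ∧
      (∀ j : ℕ, j ≤ 4 →
        ∑ i, x i * z i ^ j = (-2 : ℂ) ^ j / (Nat.factorial (j + 1) : ℂ)) := by
  rintro ⟨x, z, -, hrat, habs, hmom⟩
  -- unit-circle relations
  have hunit : ∀ i, (starRingEnd ℂ) (z i) * z i = 1 := by
    intro i
    rw [mul_comm, Complex.mul_conj]
    rw [show Complex.normSq (z i) = ‖z i‖ ^ 2 from (Complex.sq_norm _).symm,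
      habs i]
    norm_num
  -- moment equations
  have h0 := hmom 0 (by norm_num)
  have h1 := hmom 1 (by norm_num)
  have h2 := hmom 2 (by norm_num)
  have h3 := hmom 3 (by norm_num)
  have h4 := hmom 4 (by norm_num)
  simp [Fin.sum_univ_three, Nat.factorial] at h0 h1 h2 h3 h4
  norm_num at h0 h1 h2 h3 h4
  set z0 := z 0 with hz0def
  set z1 := z 1
  set z2 := z 2
  have hA : (z0*z1*z2) + (z0*z1+z0*z2+z1*z2) + (2/3)*(z0+z1+z2) + 1/3 = 0 := by
    linear_combination h3 - (z0+z1+z2)*h2 + (z0*z1+z0*z2+z1*z2)*h1 - (z0*z1*z2)*h0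
  have hB : (z0*z1*z2) + (2/3)*(z0*z1+z0*z2+z1*z2) + (1/3)*(z0+z1+z2) + 2/15 = 0 := by
    linear_combination -h4 + (z0+z1+z2)*h3 - (z0*z1+z0*z2+z1*z2)*h2 + (z0*z1*z2)*h1
  have key1 : (z0+z1+z2) + (z0*z1+z0*z2+z1*z2) = -3/5 := by linear_combination 3*hA - 3*hB
  have key2 : z0*z1*z2 = 4/15 + (z0+z1+z2)/3 := by linear_combination hA - key1
  have hc1 : (starRingEnd ℂ) (z0+z1+z2) * (z0*z1*z2) = z0*z1+z0*z2+z1*z2 := by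
    simp only [map_add]
    linear_combination (z1*z2)*(hunit 0) + (z0*z2)*(hunit 1) + (z0*z1)*(hunit 2)
  have hc3 : (starRingEnd ℂ) (z0*z1*z2) * (z0*z1*z2) = 1 := by
    simp only [map_mul]
    linear_combination ((starRingEnd ℂ) z1 * z1)*((starRingEnd ℂ) z2 * z2)*(hunit 0)
      + ((starRingEnd ℂ) z2 * z2)*(hunit 1) + (hunit 2)
  set u := z0+z1+z2 with hu
  have heq : (starRingEnd ℂ) u * (4/15 + u/3) = -3/5 - u := by
    rw [← key2, hc1]; linear_combination key1
  have heq2 := congrArg (starRingEnd ℂ) heq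
  simp only [map_mul, map_add, map_sub, map_div₀, map_neg, map_ofNat,
    Complex.conj_conj] at heq2
  norm_num at heq2
  have hreal : (starRingEnd ℂ) u = u := by
    linear_combination (-15/11)*heq + (15/11)*heq2
  have hwre : (starRingEnd ℂ) (z0*z1*z2) = z0*z1*z2 := by
    rw [key2]
    simp only [map_add, map_div₀, map_ofNat, hreal]
  rw [hwre] at hc3
  -- coordinates of node 0
  obtain ⟨a, b, hz0⟩ := hrat 0
  rw [← hz0def] at hz0
  have hab : a ^ 2 + b ^ 2 = 1 := by
    have h := habs 0
    rw [← hz0def, hz0] at h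
    have h2 : Complex.normSq ((a:ℂ) + (b:ℂ)*Complex.I) = 1 := by
      rw [← Complex.sq_norm, h]; norm_num
    simp only [Complex.normSq_apply, Complex.add_re, Complex.add_im, Complex.mul_re,
      Complex.mul_im, Complex.ratCast_re, Complex.ratCast_im, Complex.I_re,
      Complex.I_im] at h2
    have h3 : (a:ℝ) ^ 2 + (b:ℝ) ^ 2 = 1 := by nlinarith [h2]
    exact_mod_cast h3
  rcases mul_self_eq_one_iff.mp hc3 with hw | hw
  · -- e1 = 11/5, e2 = -14/5, e3 = 1
    have he1 : z0+z1+z2 = 11/5 := by linear_combination 3*hw - 3*key2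
    have he2 : z0*z1+z0*z2+z1*z2 = -14/5 := by linear_combination key1 - 3*hw + 3*key2
    have vieta : ((a:ℂ) + (b:ℂ)*Complex.I)^3 - (11/5)*((a:ℂ) + (b:ℂ)*Complex.I)^2
        + (-14/5)*((a:ℂ) + (b:ℂ)*Complex.I) - 1 = 0 := by
      rw [← hz0]
      linear_combination (z0^2)*he1 - z0*he2 + hw
    have him := congrArg Complex.im vieta
    have hre := congrArg Complex.re vieta
    simp only [pow_succ, pow_zero, one_mul, Complex.add_im, Complex.add_re,
      Complex.sub_im, Complex.sub_re, Complex.mul_im, Complex.mul_re,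
      Complex.I_re, Complex.I_im, Complex.ratCast_re, Complex.ratCast_im,
      Complex.one_re, Complex.one_im, Complex.re_ofNat, Complex.im_ofNat,
      Complex.zero_im, Complex.zero_re, Complex.neg_re, Complex.neg_im,
      Complex.div_re, Complex.div_im, Complex.normSq] at him hre
    norm_num at him hre
    have him' : (a*a - b*b)*b + (a*b + b*a)*a - 11/5*(a*b + b*a) - 14/5*b = 0 := by
      have hx : (((a*a - b*b)*b + (a*b + b*a)*a - 11/5*(a*b + b*a) - 14/5*b : ℚ) : ℝ) = 0 := by
        push_cast
        linear_combination him
      exact_mod_cast hx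
    have hre' : (a*a - b*b)*a - (a*b + b*a)*b - 11/5*(a*a - b*b) - 14/5*a - 1 = 0 := by
      have hx : (((a*a - b*b)*a - (a*b + b*a)*b - 11/5*(a*a - b*b) - 14/5*a - 1 : ℚ) : ℝ) = 0 := by
        push_cast
        linear_combination hre
      exact_mod_cast hx
    have hq : b * (20*a^2 - 22*a - 19) = 0 := by
      linear_combination 5*him' + (5*b)*hab
    rcases mul_eq_zero.mp hq with hb | hquad
    · have ha2 : (a - 1) * (a + 1) = 0 := by
        linear_combination hab - b*hb
      rcases mul_eq_zero.mp ha2 with h | h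
      · have ha : a = 1 := by linarith [sub_eq_zero.mp h]
        rw [ha, hb] at hre'; norm_num at hre'
      · have ha : a = -1 := by linarith [eq_neg_of_add_eq_zero_left h]
        rw [ha, hb] at hre'; norm_num at hre'
    · exact rat_sq_ne_nonsquare_nat (20*a - 11) 501 not_isSquare_501
        (by push_cast; linear_combination 20*hquad)
  · -- e1 = -19/5, e2 = 16/5, e3 = -1
    have he1 : z0+z1+z2 = -19/5 := by linear_combination 3*hw - 3*key2
    have he2 : z0*z1+z0*z2+z1*z2 = 16/5 := by linear_combination key1 - 3*hw + 3*key2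
    have vieta : ((a:ℂ) + (b:ℂ)*Complex.I)^3 + (19/5)*((a:ℂ) + (b:ℂ)*Complex.I)^2
        + (16/5)*((a:ℂ) + (b:ℂ)*Complex.I) + 1 = 0 := by
      rw [← hz0]
      linear_combination (z0^2)*he1 - z0*he2 + hw
    have him := congrArg Complex.im vieta
    have hre := congrArg Complex.re vieta
    simp only [pow_succ, pow_zero, one_mul, Complex.add_im, Complex.add_re,
      Complex.sub_im, Complex.sub_re, Complex.mul_im, Complex.mul_re,
      Complex.I_re, Complex.I_im, Complex.ratCast_re, Complex.ratCast_im,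
      Complex.one_re, Complex.one_im, Complex.re_ofNat, Complex.im_ofNat,
      Complex.zero_im, Complex.zero_re, Complex.neg_re, Complex.neg_im,
      Complex.div_re, Complex.div_im, Complex.normSq] at him hre
    norm_num at him hre
    have him' : (a*a - b*b)*b + (a*b + b*a)*a + 19/5*(a*b + b*a) + 16/5*b = 0 := by
      have hx : (((a*a - b*b)*b + (a*b + b*a)*a + 19/5*(a*b + b*a) + 16/5*b : ℚ) : ℝ) = 0 := by
        push_cast
        linear_combination him
      exact_mod_cast hx
    have hre' : (a*a - b*b)*a - (a*b + b*a)*b + 19/5*(a*a - b*b) + 16/5*a + 1 = 0 := by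
      have hx : (((a*a - b*b)*a - (a*b + b*a)*b + 19/5*(a*a - b*b) + 16/5*a + 1 : ℚ) : ℝ) = 0 := by
        push_cast
        linear_combination hre
      exact_mod_cast hx
    have hq : b * (20*a^2 + 38*a + 11) = 0 := by
      linear_combination 5*him' + (5*b)*hab
    rcases mul_eq_zero.mp hq with hb | hquad
    · have ha2 : (a - 1) * (a + 1) = 0 := by
        linear_combination hab - b*hb
      rcases mul_eq_zero.mp ha2 with h | h
      · have ha : a = 1 := by linarith [sub_eq_zero.mp h]
        rw [ha, hb] at hre'; norm_num at hre'
      · have ha : a = -1 := by linarith [eq_neg_of_add_eq_zero_left h]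
        rw [ha, hb] at hre'; norm_num at hre'
    · exact rat_sq_ne_nonsquare_nat (20*a + 19) 141 not_isSquare_141
        (by push_cast; linear_combination 20*hquad)
end

section
/- There do not exist complex numbers x₁, x₂, x₃ and pairwise distinct complex numbers z₁, z₂, z₃, each with rational real and imaginary parts and of modulus 1, such that ∑_{i=1}^{3} x_i·z_i^j = (−2)^j/(j+1)! for every integer j with 0 ≤ j ≤ 3. (Equivalently: there is no quadrature formula of degree 3 for the Bessel weight with 3 nodes on ℚ(√−1) ∩ S¹.) -/
/-- A rational whose square is an integer is an integer. -/
lemma sq_int_rat_aux (q : ℚ) (n : ℤ) (h : q^2 = (n:ℚ)) : ∃ m : ℤ, q = (m:ℚ) := by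
  have hd : q.den ^ 2 = 1 := by
    have := congrArg Rat.den h
    rwa [Rat.den_pow, Rat.den_intCast] at this
  have hd1 : q.den = 1 := by
    have h2 : q.den * q.den = 1 := by nlinarith
    exact Nat.eq_one_of_mul_eq_one_right h2
  refine ⟨q.num, ?_⟩
  have := Rat.num_div_den q
  rw [hd1] at this
  simpa using this.symm

lemma zmod4_aux : ∀ Y T C H : ZMod 4, T^2 = 4*H^2 - Y^2 →
    C^2 = 11*Y^2 + 42*Y*H + 43*H^2 → (Y = 0 ∨ Y = 2) ∧ (H = 0 ∨ H = 2) := by decide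

lemma complex_split_aux (A B : ℚ) (h : (A:ℂ) + (B:ℂ)*Complex.I = 0) : A = 0 ∧ B = 0 := by
  have hre := congrArg Complex.re h
  have him := congrArg Complex.im h
  simp [Complex.add_re, Complex.add_im, Complex.mul_re, Complex.mul_im,
    Complex.I_re, Complex.I_im, Complex.ratCast_re, Complex.ratCast_im] at hre him
  exact ⟨by exact_mod_cast hre, by exact_mod_cast him⟩

open Finset in
/-- There is no quadrature formula of degree 3 for the Bessel weight with 3 nodes
on `ℚ(√-1) ∩ S¹`. -/
theorem no_bessel_quadrature_deg3_three_nodes_on_QiS1 :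
    ¬ ∃ (x z : Fin 3 → ℂ),
      Function.Injective z ∧
      (∀ i, ∃ a b : ℚ, z i = (a : ℂ) + (b : ℂ) * Complex.I) ∧
      (∀ i, ‖z i‖ = 1) ∧
      (∀ j : ℕ, j ≤ 3 →
        ∑ i, x i * z i ^ j = (-2 : ℂ) ^ j / (Nat.factorial (j + 1) : ℂ)) := by
  rintro ⟨x, z, -, hrat, habs, hmom⟩
  choose a b hz using hrat
  -- rational norm equations
  have hn : ∀ i, (a i)^2 + (b i)^2 = 1 := by
    intro i
    have h1 : Complex.normSq (z i) = 1 := by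
      rw [Complex.normSq_eq_norm_sq, habs i]; norm_num
    rw [hz i] at h1
    simp [Complex.normSq_apply, Complex.add_re, Complex.add_im, Complex.mul_re,
      Complex.mul_im, Complex.I_re, Complex.I_im, Complex.ratCast_re, Complex.ratCast_im] at h1
    have h2 : ((a i : ℝ))^2 + ((b i : ℝ))^2 = 1 := by linear_combination h1
    exact_mod_cast h2
  -- conjugate nodes
  obtain ⟨w, hw⟩ : ∃ w : Fin 3 → ℂ, ∀ i, w i = ((a i : ℚ) : ℂ) - ((b i : ℚ) : ℂ) * Complex.I :=
    ⟨_, fun i => rfl⟩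
  have hzw : ∀ i, z i * w i = 1 := by
    intro i
    have hnC : ((a i : ℚ) : ℂ)^2 + ((b i : ℚ) : ℂ)^2 = 1 := by exact_mod_cast hn i
    rw [hz i, hw i]
    linear_combination hnC - ((b i : ℚ) : ℂ)^2 * Complex.I_sq
  have hconj : ∀ i, (starRingEnd ℂ) (z i) = w i := by
    intro i
    rw [hz i, hw i, map_add, map_mul, Complex.conj_I, map_ratCast, map_ratCast]
    ring
  -- moment equations
  have h0 := hmom 0 (by norm_num)
  have h1 := hmom 1 (by norm_num)
  have h2 := hmom 2 (by norm_num)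
  have h3 := hmom 3 (by norm_num)
  simp only [Fin.sum_univ_three] at h0 h1 h2 h3
  norm_num [Nat.factorial] at h0 h1 h2 h3
  -- the key polynomial relation (degree-3 quasi-orthogonality)
  have E1 : 3*(z 0*z 1*z 2) + 3*(z 0*z 1 + z 0*z 2 + z 1*z 2) + 2*(z 0 + z 1 + z 2) + 1 = 0 := by
    linear_combination 3*h3 - 3*(z 0 + z 1 + z 2)*h2 + 3*(z 0*z 1 + z 0*z 2 + z 1*z 2)*h1
      - 3*(z 0*z 1*z 2)*h0
  have E1' : 3*(w 0*w 1*w 2) + 3*(w 0*w 1 + w 0*w 2 + w 1*w 2) + 2*(w 0 + w 1 + w 2) + 1 = 0 := by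
    have hc := congrArg (starRingEnd ℂ) E1
    simp only [map_add, map_mul, map_ofNat, map_one, map_zero, hconj 0, hconj 1, hconj 2] at hc
    linear_combination hc
  have hA : (z 0*z 1*z 2) * (w 0 + w 1 + w 2) = z 0*z 1 + z 0*z 2 + z 1*z 2 := by
    linear_combination (z 1*z 2)*hzw 0 + (z 0*z 2)*hzw 1 + (z 0*z 1)*hzw 2
  have hB : (z 0*z 1*z 2) * (w 0*w 1 + w 0*w 2 + w 1*w 2) = z 0 + z 1 + z 2 := by
    linear_combination (z 2*z 1*w 1 + z 1*z 2*w 2)*hzw 0 + (z 2 + z 0*z 2*w 2)*hzw 1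
      + (z 1 + z 0)*hzw 2
  have hC : (z 0*z 1*z 2) * (w 0*w 1*w 2) = 1 := by
    linear_combination (z 1*w 1*(z 2*w 2))*hzw 0 + (z 2*w 2)*hzw 1 + hzw 2
  have E2 : (z 0*z 1*z 2) + 2*(z 0*z 1 + z 0*z 2 + z 1*z 2) + 3*(z 0 + z 1 + z 2) + 3 = 0 := by
    linear_combination (z 0*z 1*z 2)*E1' - 2*hA - 3*hB - 3*hC
  have hp : 3*(z 0*z 1*z 2) = 5*(z 0 + z 1 + z 2) + 7 := by
    linear_combination 2*E1 - 3*E2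
  have hq : 3*(z 0*z 1 + z 0*z 2 + z 1*z 2) + 7*(z 0 + z 1 + z 2) + 8 = 0 := by
    linear_combination 3*E2 - E1
  have hiii : (z 0 + z 1)*(3*z 2^2 + 7*z 2 + 5) + (7*z 2^2 + 13*z 2 + 7) = 0 := by
    linear_combination z 2 * hq - hp
  have hm' : (z 0*z 1)*(3*z 2^2 + 7*z 2 + 5) = 5*z 2^2 + 7*z 2 + 3 := by
    linear_combination ((3*z 2^2 + 7*z 2 + 5)/3)*hq - ((3*z 2 + 7)/3)*hiii
  have hsq : ((z 0 - z 1)*(3*z 2^2 + 7*z 2 + 5))^2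
      = -(11*z 2^4 + 42*z 2^3 + 65*z 2^2 + 42*z 2 + 11) := by
    linear_combination ((z 0 + z 1)*(3*z 2^2 + 7*z 2 + 5) - (7*z 2^2 + 13*z 2 + 7))*hiii
      - 4*(3*z 2^2 + 7*z 2 + 5)*hm'
  have hq2 : ((z 0 - z 1)*(3*z 2^2 + 7*z 2 + 5)*w 2)^2
      + 11*(z 2 + w 2)^2 + 42*(z 2 + w 2) + 43 = 0 := by
    linear_combination (w 2^2)*hsq + (-11*z 2^3*w 2 - 42*z 2^2*w 2 - 11*z 2^2 - 65*z 2*w 2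
      - 42*z 2 - 42*w 2 - 43)*hzw 2
  -- rational real/imaginary parts of the key quantity
  obtain ⟨u, hu⟩ : ∃ u : ℚ, u =
      ((a 0 - a 1)*(3*(a 2)^2 - 3*(b 2)^2 + 7*(a 2) + 5) - (b 0 - b 1)*(6*(a 2)*(b 2) + 7*(b 2)))*(a 2)
      + ((a 0 - a 1)*(6*(a 2)*(b 2) + 7*(b 2)) + (b 0 - b 1)*(3*(a 2)^2 - 3*(b 2)^2 + 7*(a 2) + 5))*(b 2) :=
    ⟨_, rfl⟩
  obtain ⟨v, hv⟩ : ∃ v : ℚ, v =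
      ((a 0 - a 1)*(6*(a 2)*(b 2) + 7*(b 2)) + (b 0 - b 1)*(3*(a 2)^2 - 3*(b 2)^2 + 7*(a 2) + 5))*(a 2)
      - ((a 0 - a 1)*(3*(a 2)^2 - 3*(b 2)^2 + 7*(a 2) + 5) - (b 0 - b 1)*(6*(a 2)*(b 2) + 7*(b 2)))*(b 2) :=
    ⟨_, rfl⟩
  have hrepr : (z 0 - z 1)*(3*z 2^2 + 7*z 2 + 5)*w 2 = (u:ℂ) + (v:ℂ)*Complex.I := by
    rw [hz 0, hz 1, hz 2, hw 2, hu, hv]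
    push_cast
    linear_combination (5*(b 1:ℂ)*(b 2:ℂ) + 7*(b 1:ℂ)*(b 2:ℂ)^2*Complex.I + (-3)*(b 1:ℂ)*(b 2:ℂ)^3
      + 3*(b 1:ℂ)*(b 2:ℂ)^3*Complex.I^2 + (-5)*(b 0:ℂ)*(b 2:ℂ) + (-7)*(b 0:ℂ)*(b 2:ℂ)^2*Complex.I
      + 3*(b 0:ℂ)*(b 2:ℂ)^3 + (-3)*(b 0:ℂ)*(b 2:ℂ)^3*Complex.I^2
      + 3*(a 2:ℂ)*(b 1:ℂ)*(b 2:ℂ)^2*Complex.I + (-3)*(a 2:ℂ)*(b 0:ℂ)*(b 2:ℂ)^2*Complex.I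
      + (-3)*(a 2:ℂ)^2*(b 1:ℂ)*(b 2:ℂ) + 3*(a 2:ℂ)^2*(b 0:ℂ)*(b 2:ℂ) + 7*(a 1:ℂ)*(b 2:ℂ)^2
      + 3*(a 1:ℂ)*(b 2:ℂ)^3*Complex.I + 3*(a 1:ℂ)*(a 2:ℂ)*(b 2:ℂ)^2 + (-7)*(a 0:ℂ)*(b 2:ℂ)^2
      + (-3)*(a 0:ℂ)*(b 2:ℂ)^3*Complex.I + (-3)*(a 0:ℂ)*(a 2:ℂ)*(b 2:ℂ)^2) * Complex.I_sq
  have hy : z 2 + w 2 = 2*((a 2 : ℚ):ℂ) := by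
    rw [hz 2, hw 2]; ring
  have hfin : ((u:ℂ) + (v:ℂ)*Complex.I)^2 + 11*(2*((a 2 : ℚ):ℂ))^2
      + 42*(2*((a 2 : ℚ):ℂ)) + 43 = 0 := by
    rw [← hrepr]
    linear_combination hq2 - (11*(2*((a 2 : ℚ):ℂ) + (z 2 + w 2)) + 42)*hy
  have hAB : ((u^2 - v^2 + 11*(2*(a 2))^2 + 42*(2*(a 2)) + 43 : ℚ) : ℂ)
      + ((2*u*v : ℚ):ℂ)*Complex.I = 0 := by
    push_cast
    linear_combination hfin - ((v : ℚ):ℂ)^2*Complex.I_sq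
  obtain ⟨hA0, hB0⟩ := complex_split_aux _ _ hAB
  have huv : u * v = 0 := by linarith
  rcases mul_eq_zero.mp huv with hu0 | hv0
  · -- u = 0 : integer descent mod 4
    set yq : ℚ := 2*(a 2) with hyqdef
    have hv2 : v^2 = 11*yq^2 + 42*yq + 43 := by
      linear_combination u*hu0 - hA0
    have hyt : yq^2 + (2*(b 2))^2 = 4 := by
      linear_combination 4*(hn 2)
    have hyH : yq * ((yq.den : ℚ)) = (yq.num : ℚ) := Rat.mul_den_eq_num yq
    have hTsq : ((2*(b 2))*(yq.den : ℚ))^2 = ((4*(yq.den:ℤ)^2 - yq.num^2 : ℤ) : ℚ) := by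
      push_cast
      linear_combination ((yq.den : ℚ))^2*hyt - (yq*(yq.den:ℚ) + (yq.num:ℚ))*hyH
    have hCsq : (v*(yq.den : ℚ))^2
        = ((11*yq.num^2 + 42*yq.num*(yq.den:ℤ) + 43*(yq.den:ℤ)^2 : ℤ) : ℚ) := by
      push_cast
      linear_combination ((yq.den : ℚ))^2*hv2
        + (11*(yq*(yq.den:ℚ) + (yq.num:ℚ)) + 42*(yq.den:ℚ))*hyH
    obtain ⟨T, hT⟩ := sq_int_rat_aux _ _ hTsq
    obtain ⟨C, hC⟩ := sq_int_rat_aux _ _ hCsq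
    have hTZ : T^2 = 4*(yq.den:ℤ)^2 - yq.num^2 := by
      have := hTsq; rw [hT] at this; exact_mod_cast this
    have hCZ : C^2 = 11*yq.num^2 + 42*yq.num*(yq.den:ℤ) + 43*(yq.den:ℤ)^2 := by
      have := hCsq; rw [hC] at this; exact_mod_cast this
    have e1 : ((T : ZMod 4))^2 = 4*((yq.den : ZMod 4))^2 - ((yq.num : ZMod 4))^2 := by
      have := congrArg (fun n : ℤ => (n : ZMod 4)) hTZ
      push_cast at this
      exact this
    have e2 : ((C : ZMod 4))^2 = 11*((yq.num : ZMod 4))^2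
        + 42*((yq.num : ZMod 4))*((yq.den : ZMod 4)) + 43*((yq.den : ZMod 4))^2 := by
      have := congrArg (fun n : ℤ => (n : ZMod 4)) hCZ
      push_cast at this
      exact this
    obtain ⟨hY4, hH4⟩ := zmod4_aux (yq.num : ZMod 4) (T : ZMod 4) (C : ZMod 4)
      ((yq.den : ZMod 4)) e1 e2
    have h2Y : (2:ℤ) ∣ yq.num := by
      rcases hY4 with h | h
      · exact dvd_trans (by norm_num) ((ZMod.intCast_zmod_eq_zero_iff_dvd _ 4).mp h)
      · have hh : ((yq.num - 2 : ℤ) : ZMod 4) = 0 := by push_cast; rw [h]; ring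
        have h4 := (ZMod.intCast_zmod_eq_zero_iff_dvd _ 4).mp hh
        omega
    have h2H : (2:ℤ) ∣ ((yq.den : ℤ)) := by
      rcases hH4 with h | h
      · have hh : (((yq.den:ℤ)) : ZMod 4) = 0 := by push_cast; exact h
        exact dvd_trans (by norm_num) ((ZMod.intCast_zmod_eq_zero_iff_dvd _ 4).mp hh)
      · have hh : (((yq.den:ℤ) - 2 : ℤ) : ZMod 4) = 0 := by push_cast; rw [h]; ring
        have h4 := (ZMod.intCast_zmod_eq_zero_iff_dvd _ 4).mp hh
        omega
    have hcop := yq.reduced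
    have d1 : (2:ℕ) ∣ yq.num.natAbs := by
      have : ((2:ℤ)).natAbs ∣ yq.num.natAbs := Int.natAbs_dvd_natAbs.mpr h2Y
      simpa using this
    have d2 : (2:ℕ) ∣ yq.den := by exact_mod_cast h2H
    have : (2:ℕ) ∣ Nat.gcd yq.num.natAbs yq.den := Nat.dvd_gcd d1 d2
    rw [hcop] at this
    omega
  · -- v = 0 : positivity contradiction
    rw [hv0] at hA0
    nlinarith [sq_nonneg u, sq_nonneg (22*(a 2) + 21)]
end

section
/- For every integer r ≥ 0, there exist pairwise distinct rational numbers q₁,…,q_{r+1} and complex numbers x₁,…,x_{r+1} such that ∑_{i=1}^{r+1} x_i·q_i^j = (−2)^j/(j+1)! for every integer j with 0 ≤ j ≤ r+1. (Equivalently: there exists a quadrature formula of degree r+1 for the Bessel weight with r+1 nodes on ℚ.) -/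
open Polynomial Finset

noncomputable section BesselQuadAux

/-- Bessel moments. -/
def besselMom (j : ℕ) : ℚ := (-2) ^ j / ((j + 1).factorial : ℚ)

/-- Truncated moment functional. -/
def LB (n : ℕ) (p : ℚ[X]) : ℚ := ∑ k ∈ range n, p.coeff k * besselMom k

lemma LB_sub (n : ℕ) (p q : ℚ[X]) : LB n (p - q) = LB n p - LB n q := by
  simp [LB, sub_mul, Finset.sum_sub_distrib]

lemma LB_C_mul (n : ℕ) (c : ℚ) (p : ℚ[X]) : LB n (C c * p) = c * LB n p := by
  simp [LB, mul_assoc, Finset.mul_sum]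

lemma LB_X_pow (n j : ℕ) (hj : j < n) : LB n (X ^ j) = besselMom j := by
  rw [LB, Finset.sum_eq_single j]
  · simp
  · intro k _ hk; simp [coeff_X_pow, hk]
  · intro h; exact absurd (Finset.mem_range.mpr hj) h

lemma LB_sum {ι : Type*} (n : ℕ) (s : Finset ι) (f : ι → ℚ[X]) :
    LB n (∑ i ∈ s, f i) = ∑ i ∈ s, LB n (f i) := by
  simp only [LB, finset_sum_coeff, Finset.sum_mul]
  exact Finset.sum_comm

/-- Bivariate version: polynomials in `Y` as coefficients. -/
def LBY (n : ℕ) (P : Polynomial (Polynomial ℚ)) : Polynomial ℚ :=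
  ∑ k ∈ range n, P.coeff k * C (besselMom k)

def nodesPoly (l : List ℚ) : ℚ[X] := (l.map fun c => X - C c).prod

def gP (l : List ℚ) : Polynomial (Polynomial ℚ) :=
  (l.map fun c => X - C (C c * X)).prod

lemma gP_nil : gP [] = 1 := by simp [gP]

lemma gP_cons (c : ℚ) (l : List ℚ) :
    gP (c :: l) = (X - C (C c * X)) * gP l := by
  simp [gP]

lemma nodesPoly_append (l : List ℚ) (c : ℚ) :
    nodesPoly (l ++ [c]) = nodesPoly l * (X - C c) := by
  simp [nodesPoly]

lemma gP_map_eval (a : ℚ) (l : List ℚ) :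
    (gP l).map (evalRingHom a) = nodesPoly (l.map (fun c => a * c)) := by
  unfold gP nodesPoly
  rw [← Polynomial.coe_mapRingHom, map_list_prod, List.map_map, List.map_map]
  refine congrArg List.prod (List.map_congr_left fun c _ => ?_)
  simp only [Function.comp_apply, coe_mapRingHom, Polynomial.map_sub, Polynomial.map_X,
    Polynomial.map_C, coe_evalRingHom, eval_mul, eval_C, eval_X]
  rw [mul_comm]

lemma LBY_eval (n : ℕ) (a : ℚ) (P : Polynomial (Polynomial ℚ)) :
    (LBY n P).eval a = LB n (P.map (evalRingHom a)) := by
  simp [LBY, LB, eval_finset_sum, coeff_map]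

/-- Degree bound on coefficients of `gP`. -/
lemma gP_coeff_natDegree (l : List ℚ) (k : ℕ) :
    ((gP l).coeff k).natDegree + k ≤ l.length ∨ (gP l).coeff k = 0 := by
  induction l generalizing k with
  | nil =>
    cases k with
    | zero => left; simp [gP_nil]
    | succ k => right; simp [gP_nil, coeff_one, Nat.succ_ne_zero]
  | cons c l ih =>
    rw [gP_cons, sub_mul, coeff_sub, coeff_C_mul]
    simp only [List.length_cons]
    have hmul : ∀ m : ℕ, ((C c * X : Polynomial ℚ) * (gP l).coeff m).natDegree ≤
        1 + ((gP l).coeff m).natDegree := fun m =>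
      le_trans natDegree_mul_le (Nat.add_le_add_right
        (le_trans (natDegree_C_mul_le _ _) natDegree_X_le) _)
    cases k with
    | zero =>
      rw [mul_coeff_zero, coeff_X_zero, zero_mul, zero_sub, natDegree_neg]
      rcases ih 0 with h | h
      · left; have := hmul 0; omega
      · right; simp [h]
    | succ k =>
      rw [coeff_X_mul]
      rcases ih k with h1 | h1 <;> rcases ih (k + 1) with h2 | h2
      · left
        have hsub := natDegree_sub_le ((gP l).coeff k)
          ((C c * X : Polynomial ℚ) * (gP l).coeff (k + 1))
        have h3 := le_max_iff.mp hsub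
        have := hmul (k + 1)
        omega
      · left; rw [h2, mul_zero, sub_zero]; omega
      · left; rw [h1, zero_sub, natDegree_neg]; have := hmul (k + 1); omega
      · right; rw [h1, h2, mul_zero, sub_zero]

lemma besselMom_zero : besselMom 0 = 1 := by simp [besselMom]

lemma gP_coeff_zero (l : List ℚ) :
    (gP l).coeff 0 = C ((l.map fun c => -c).prod) * X ^ l.length := by
  induction l with
  | nil => simp [gP_nil]
  | cons c l ih =>
    rw [gP_cons, mul_coeff_zero, ih, coeff_sub, coeff_X_zero, coeff_C_zero]
    simp only [List.map_cons, List.prod_cons, List.length_cons]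
    rw [C_mul, C_neg]
    ring

lemma LBY_gP_coeff (n : ℕ) (l : List ℚ) (h : l.length < n) :
    (LBY n (gP l)).coeff l.length = (l.map fun c => -c).prod := by
  rw [LBY, finset_sum_coeff]
  rw [Finset.sum_eq_single 0]
  · rw [coeff_mul_C, gP_coeff_zero, besselMom_zero, mul_one, coeff_C_mul,
      coeff_X_pow, if_pos rfl, mul_one]
  · intro k _ hk
    rw [coeff_mul_C]
    rcases gP_coeff_natDegree l k with hb | hb
    · have : ((gP l).coeff k).natDegree < l.length := by omega
      rw [coeff_eq_zero_of_natDegree_lt this, zero_mul]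
    · rw [hb, coeff_zero, zero_mul]
  · intro h0; exact absurd (Finset.mem_range.mpr (by omega)) h0

lemma LBY_gP_ne_zero (n : ℕ) (l : List ℚ) (h : l.length < n)
    (hl : ∀ c ∈ l, c ≠ 0) : LBY n (gP l) ≠ 0 := by
  intro hF
  have h1 := LBY_gP_coeff n l h
  rw [hF, coeff_zero] at h1
  refine List.prod_ne_zero ?_ h1.symm
  intro h0
  rcases List.mem_map.mp h0 with ⟨c, hc, hc0⟩
  exact hl c hc (by linarith [hc0])

end BesselQuadAux



open Finset in
/-- For every `r ≥ 0` there is a quadrature formula of degree `r + 1` for the Bessel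
weight with `r + 1` nodes on `ℚ`. -/
theorem exists_bessel_quadrature_deg_r_add_one_on_Q (r : ℕ) :
    ∃ (q : Fin (r + 1) → ℚ) (x : Fin (r + 1) → ℂ),
      Function.Injective q ∧
      (∀ j : ℕ, j ≤ r + 1 →
        ∑ i, x i * (q i : ℂ) ^ j = (-2 : ℂ) ^ j / (Nat.factorial (j + 1) : ℂ)) := by
  classical
  set n := r + 2 with hn
  set l₀ : List ℚ := List.ofFn (fun i : Fin r => ((i : ℕ) : ℚ) + 1) with hl₀
  have hl₀len : l₀.length = r := by simp [hl₀]
  have hl₀ne : ∀ c ∈ l₀, c ≠ 0 := by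
    intro c hc
    rcases List.mem_ofFn.mp hc with ⟨i, hi⟩
    rw [← hi]
    positivity
  have hF₀ : LBY n (gP l₀) ≠ 0 := LBY_gP_ne_zero _ _ (by omega) hl₀ne
  have hFi : ∀ i : ℕ, LBY n (gP (l₀ ++ [((i : ℕ) : ℚ) + 1])) ≠ 0 := by
    intro i
    refine LBY_gP_ne_zero _ _ (by simp [hl₀len]; omega) ?_
    intro c hc
    rcases List.mem_append.mp hc with h | h
    · exact hl₀ne c h
    · rw [List.mem_singleton.mp h]; positivity
  set B : Finset ℚ := insert 0 ((LBY n (gP l₀)).roots.toFinset ∪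
      (Finset.range r).biUnion fun i =>
        (LBY n (gP (l₀ ++ [((i : ℕ) : ℚ) + 1]))).roots.toFinset) with hB
  obtain ⟨a, haB⟩ := Infinite.exists_notMem_finset B
  have ha0 : a ≠ 0 := fun h => haB (by rw [hB, h]; exact Finset.mem_insert_self _ _)
  set Q : ℚ[X] := nodesPoly (l₀.map fun c => a * c) with hQdef
  have hQeval : (LBY n (gP l₀)).eval a = LB n Q := by rw [LBY_eval, gP_map_eval]
  have hLQ : LB n Q ≠ 0 := by
    intro h
    apply haB
    rw [hB]
    refine Finset.mem_insert_of_mem (Finset.mem_union_left _ (Multiset.mem_toFinset.mpr ?_))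
    exact Polynomial.mem_roots'.mpr ⟨hF₀, by rwa [Polynomial.IsRoot, hQeval]⟩
  have hext : ∀ c : ℚ, LB n (Q * (X - C c)) = LB n (X * Q) - c * LB n Q := by
    intro c
    have h1 : Q * (X - C c) = X * Q - C c * Q := by ring
    rw [h1, LB_sub, LB_C_mul]
  set t : ℚ := LB n (X * Q) / LB n Q with htdef
  have ht : LB n (Q * (X - C t)) = 0 := by
    rw [hext, htdef, div_mul_cancel₀ _ hLQ, sub_self]
  have htne : ∀ i : ℕ, i < r → t ≠ a * (((i : ℕ) : ℚ) + 1) := by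
    intro i hi heq
    have h1 : LB n (Q * (X - C (a * (((i : ℕ) : ℚ) + 1)))) = 0 := by rw [← heq]; exact ht
    have h2 : Q * (X - C (a * (((i : ℕ) : ℚ) + 1)))
        = nodesPoly ((l₀ ++ [((i : ℕ) : ℚ) + 1]).map fun c => a * c) := by
      rw [List.map_append, List.map_singleton, nodesPoly_append]
    have h3 : (LBY n (gP (l₀ ++ [((i : ℕ) : ℚ) + 1]))).eval a = 0 := by
      rw [LBY_eval, gP_map_eval, ← h2]; exact h1
    apply haB
    rw [hB]
    refine Finset.mem_insert_of_mem (Finset.mem_union_right _ ?_)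
    refine Finset.mem_biUnion.mpr ⟨i, Finset.mem_range.mpr hi, Multiset.mem_toFinset.mpr ?_⟩
    exact Polynomial.mem_roots'.mpr ⟨hFi i, h3⟩
  set q : Fin (r + 1) → ℚ := fun i => if (i : ℕ) < r then a * (((i : ℕ) : ℚ) + 1) else t
    with hq
  have hqlt : ∀ i : Fin (r + 1), (i : ℕ) < r → q i = a * (((i : ℕ) : ℚ) + 1) := by
    intro i hi; rw [hq]; simp [hi]
  have hqlast : ∀ i : Fin (r + 1), ¬ (i : ℕ) < r → q i = t := by
    intro i hi; rw [hq]; simp [hi]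
  have hinj : Function.Injective q := by
    intro i j hij
    by_cases hi : (i : ℕ) < r <;> by_cases hj : (j : ℕ) < r
    · rw [hqlt i hi, hqlt j hj] at hij
      have h1 := mul_left_cancel₀ ha0 hij
      have h2 : ((i : ℕ) : ℚ) + 1 = ((j : ℕ) : ℚ) + 1 := h1
      have h3 : (i : ℕ) = (j : ℕ) := by exact_mod_cast add_right_cancel h2
      exact Fin.ext h3
    · exact absurd (((hqlast j hj).symm.trans hij.symm).trans (hqlt i hi)) (htne i hi)
    · exact absurd (((hqlast i hi).symm.trans hij).trans (hqlt j hj)) (htne j hj)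
    · have hi' : (i : ℕ) = r := by omega
      have hj' : (j : ℕ) = r := by omega
      exact Fin.ext (hi'.trans hj'.symm)
  have hQprod : ∏ i : Fin r, (X - C (a * (((i : ℕ) : ℚ) + 1))) = Q := by
    rw [hQdef, hl₀, nodesPoly, List.map_ofFn, List.map_ofFn, List.prod_ofFn]
    simp [Function.comp_def]
  set P : ℚ[X] := ∏ i : Fin (r + 1), (X - C (q i)) with hP
  have hPsplit : P = Q * (X - C t) := by
    rw [hP, Fin.prod_univ_castSucc]
    congr 1
    · rw [← hQprod]
      refine Finset.prod_congr rfl fun i _ => ?_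
      rw [hqlt _ (by simpa using i.isLt)]
      simp
    · rw [hqlast _ (by simp)]
  have hLP : LB n P = 0 := by rw [hPsplit]; exact ht
  set w : Fin (r + 1) → ℚ := fun i => LB n (Lagrange.basis Finset.univ q i) with hw
  have hinjOn : Set.InjOn q ↑(Finset.univ : Finset (Fin (r + 1))) := fun x _ y _ h => hinj h
  have hEx : ∀ p : ℚ[X], p.degree < ((r + 1 : ℕ) : WithBot ℕ) →
      ∑ i, w i * p.eval (q i) = LB n p := by
    intro p hdeg
    have hdeg' : p.degree < #(Finset.univ : Finset (Fin (r + 1))) := by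
      simpa using hdeg
    have hp := Lagrange.eq_interpolate hinjOn hdeg'
    calc ∑ i, w i * p.eval (q i)
        = LB n (Lagrange.interpolate Finset.univ q fun i => p.eval (q i)) := by
          rw [Lagrange.interpolate_apply, LB_sum]
          exact Finset.sum_congr rfl fun i _ => by rw [LB_C_mul, hw, mul_comm]
      _ = LB n p := by rw [← hp]
  have hmom : ∀ j : ℕ, j ≤ r + 1 → ∑ i, w i * q i ^ j = besselMom j := by
    intro j hj
    rcases lt_or_eq_of_le hj with hjr | hjr
    · have h1 : ∑ i, w i * q i ^ j = ∑ i, w i * (X ^ j : ℚ[X]).eval (q i) := by simp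
      rw [h1, hEx _ (by rw [degree_X_pow]; exact_mod_cast hjr), LB_X_pow _ _ (by omega)]
    · have hPmonic : P.Monic := monic_prod_of_monic _ _ fun i _ => monic_X_sub_C _
      have hPdeg : P.natDegree = r + 1 := by
        rw [hP, natDegree_prod _ _ fun i _ => X_sub_C_ne_zero _]
        simp [natDegree_X_sub_C]
      have hdlt : (X ^ (r + 1) - P : ℚ[X]).degree < ((r + 1 : ℕ) : WithBot ℕ) := by
        have hd : (X ^ (r + 1) : ℚ[X]).degree = P.degree := by
          rw [degree_X_pow, degree_eq_natDegree hPmonic.ne_zero, hPdeg]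
        have := degree_sub_lt hd (pow_ne_zero (r + 1) X_ne_zero) (by
          rw [leadingCoeff_X_pow, hPmonic.leadingCoeff])
        rwa [degree_X_pow] at this
      have hPeval : ∀ i, P.eval (q i) = 0 := by
        intro i
        rw [hP, eval_prod]
        exact Finset.prod_eq_zero (Finset.mem_univ i) (by simp)
      have h1 : ∑ i, w i * q i ^ j
          = ∑ i, w i * (X ^ (r + 1) - P : ℚ[X]).eval (q i) := by
        refine Finset.sum_congr rfl fun i _ => ?_
        rw [eval_sub, eval_pow, eval_X, hPeval, sub_zero, hjr]
      rw [h1, hEx _ hdlt, LB_sub, hLP, sub_zero, LB_X_pow _ _ (by omega), hjr]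
  refine ⟨q, fun i => ((w i : ℚ) : ℂ), hinj, ?_⟩
  intro j hj
  have h1 := hmom j hj
  have h2 : ((∑ i, w i * q i ^ j : ℚ) : ℂ) = ((besselMom j : ℚ) : ℂ) := by rw [h1]
  rw [besselMom] at h2
  push_cast at h2
  convert h2 using 2
end

section
/- (Riesz–Shohat theorem, complex version.) Let L be a moment functional on ℂ[X] admitting a family (φ_l)_{l≥0} of monic orthogonal polynomials. Let r ≥ 0, let k be an integer with 1 ≤ k ≤ r+2, let z₁,…,z_{r+1} ∈ ℂ be pairwise distinct, and set θ_{r+1}(X) = ∏_{i=1}^{r+1}(X − z_i). Then the following are equivalent: (1) there exist x₁,…,x_{r+1} ∈ ℂ such that ∑_{i=1}^{r+1} x_i f(z_i) = L(f) for every polynomial f ∈ ℂ[X] with deg f ≤ 2(r+1) − k; (2) there exist b₁,…,b_{k−1} ∈ ℂ such that θ_{r+1} = φ_{r+1} + b₁ φ_r + ⋯ + b_{k−1} φ_{r+2−k}. -/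
open Polynomial Finset

/-- Any polynomial of degree at most `n` is a linear combination of `φ 0, …, φ n`. -/
private lemma expand_aux (φ : ℕ → Polynomial ℂ)
    (hmonic : ∀ l, (φ l).Monic) (hdeg : ∀ l, (φ l).natDegree = l) :
    ∀ (n : ℕ) (p : Polynomial ℂ), p.natDegree ≤ n →
      ∃ c : ℕ → ℂ, p = ∑ m ∈ range (n + 1), c m • φ m := by
  intro n
  induction n with
  | zero =>
    intro p hp
    refine ⟨fun _ => p.coeff 0, ?_⟩
    have h0 : φ 0 = 1 := ((hmonic 0).natDegree_eq_zero).mp (hdeg 0)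
    rw [Finset.sum_range_one, h0, smul_eq_C_mul, mul_one]
    exact Polynomial.eq_C_of_natDegree_le_zero hp
  | succ n ih =>
    intro p hp
    set a := p.coeff (n + 1) with ha
    have hq : (p - a • φ (n + 1)).natDegree ≤ n := by
      rw [natDegree_le_iff_coeff_eq_zero]
      intro N hN
      rw [coeff_sub, coeff_smul]
      by_cases hN1 : N = n + 1
      · subst hN1
        have h2 : (φ (n + 1)).coeff (n + 1) = 1 := by
          have := (hmonic (n + 1)).coeff_natDegree
          rwa [hdeg] at this
        rw [h2, smul_eq_mul, mul_one, ← ha, sub_self]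
      · have hN2 : n + 1 < N := by omega
        rw [coeff_eq_zero_of_natDegree_lt (by omega),
            coeff_eq_zero_of_natDegree_lt (by rw [hdeg]; omega), smul_zero, sub_zero]
    obtain ⟨c, hc⟩ := ih (p - a • φ (n + 1)) hq
    refine ⟨fun m => if m = n + 1 then a else c m, ?_⟩
    have hsum : ∑ m ∈ range (n + 2), (if m = n + 1 then a else c m) • φ m
        = (∑ m ∈ range (n + 1), c m • φ m) + a • φ (n + 1) := by
      rw [Finset.sum_range_succ, if_pos rfl]
      congr 1
      refine Finset.sum_congr rfl fun m hm => ?_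
      rw [if_neg (by have := Finset.mem_range.mp hm; omega)]
    rw [hsum, ← hc]
    ring

/-- Orthogonality of `φ m` against all polynomials of lower degree. -/
private lemma orth_low (L : Polynomial ℂ →ₗ[ℂ] ℂ) (φ : ℕ → Polynomial ℂ)
    (hmonic : ∀ l, (φ l).Monic) (hdeg : ∀ l, (φ l).natDegree = l)
    (horth : ∀ l m, l ≠ m → L (φ l * φ m) = 0)
    (p : Polynomial ℂ) (m : ℕ) (hpm : p.natDegree < m) : L (p * φ m) = 0 := by
  obtain ⟨c, hc⟩ := expand_aux φ hmonic hdeg p.natDegree p le_rfl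
  rw [hc, Finset.sum_mul, map_sum]
  refine Finset.sum_eq_zero fun i hi => ?_
  have hi' : i < p.natDegree + 1 := Finset.mem_range.mp hi
  rw [smul_mul_assoc, map_smul, horth i m (by omega), smul_zero]

open Polynomial Finset in
/-- The Riesz–Shohat theorem over `ℂ`: for a moment functional `L` with monic orthogonal
polynomials `φ`, pairwise distinct nodes `z₁, …, z_{r+1}` admit weights giving a quadrature
formula of degree `2(r+1) - k` if and only if `θ_{r+1} = ∏ (X - z_i)` is quasi-orthogonal
of degree `r + 1` and order `k - 1`. -/
theorem riesz_shohat (L : Polynomial ℂ →ₗ[ℂ] ℂ) (φ : ℕ → Polynomial ℂ)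
    (hmonic : ∀ l, (φ l).Monic) (hdeg : ∀ l, (φ l).natDegree = l)
    (horth : ∀ l m, l ≠ m → L (φ l * φ m) = 0)
    (hnonzero : ∀ l, L (φ l ^ 2) ≠ 0)
    (r k : ℕ) (hk1 : 1 ≤ k) (hk2 : k ≤ r + 2)
    (z : Fin (r + 1) → ℂ) (hz : Function.Injective z) :
    (∃ x : Fin (r + 1) → ℂ, ∀ f : Polynomial ℂ, f.natDegree ≤ 2 * (r + 1) - k →
        ∑ i, x i * f.eval (z i) = L f) ↔
    (∃ b : Fin (k - 1) → ℂ,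
        ∏ i, (X - C (z i)) = φ (r + 1) + ∑ j : Fin (k - 1), b j • φ (r - (j : ℕ))) := by
  set θ : Polynomial ℂ := ∏ i, (X - C (z i)) with hθdef
  have hθmonic : θ.Monic := monic_prod_of_monic _ _ fun i _ => monic_X_sub_C _
  have hθdeg : θ.natDegree = r + 1 := by
    rw [hθdef, natDegree_prod _ _ fun i _ => X_sub_C_ne_zero _]
    simp
  have hθeval : ∀ i, θ.eval (z i) = 0 := by
    intro i
    rw [hθdef, eval_prod]
    exact Finset.prod_eq_zero (Finset.mem_univ i) (by simp)
  constructor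
  · rintro ⟨x, hx⟩
    have hsub : (θ - φ (r + 1)).natDegree ≤ r := by
      rw [natDegree_le_iff_coeff_eq_zero]
      intro N hN
      rw [coeff_sub]
      by_cases hN1 : N = r + 1
      · subst hN1
        have h1 : θ.coeff (r + 1) = 1 := by
          have := hθmonic.coeff_natDegree
          rwa [hθdeg] at this
        have h2 : (φ (r + 1)).coeff (r + 1) = 1 := by
          have := (hmonic (r + 1)).coeff_natDegree
          rwa [hdeg] at this
        rw [h1, h2, sub_self]
      · have hN2 : r + 1 < N := by omega
        rw [coeff_eq_zero_of_natDegree_lt (by omega),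
            coeff_eq_zero_of_natDegree_lt (by rw [hdeg]; omega), sub_self]
    obtain ⟨c, hc⟩ := expand_aux φ hmonic hdeg r (θ - φ (r + 1)) hsub
    -- coefficients of low-degree φ's vanish
    have hcz : ∀ m, m + k ≤ r + 1 → c m = 0 := by
      intro m hm
      have hLθ : L (θ * φ m) = 0 := by
        rw [← hx (θ * φ m) ?_]
        · exact Finset.sum_eq_zero fun i _ => by rw [eval_mul, hθeval, zero_mul, mul_zero]
        · rw [natDegree_mul hθmonic.ne_zero (hmonic m).ne_zero, hθdeg, hdeg]
          omega
      have hLφ : L (φ (r + 1) * φ m) = 0 := horth _ _ (by omega)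
      have key : L ((θ - φ (r + 1)) * φ m) = c m * L (φ m ^ 2) := by
        rw [hc, Finset.sum_mul, map_sum, Finset.sum_eq_single m
          (fun i _ hne => by rw [smul_mul_assoc, map_smul, horth i m hne, smul_zero])
          (fun h => absurd (Finset.mem_range.mpr (by omega)) h)]
        rw [smul_mul_assoc, map_smul, ← sq, smul_eq_mul]
      rw [sub_mul, map_sub, hLθ, hLφ, sub_self] at key
      rcases mul_eq_zero.mp key.symm with h | h
      · exact h
      · exact absurd h (hnonzero m)
    refine ⟨fun j => c (r - (j : ℕ)), ?_⟩
    have hθeq : θ = φ (r + 1) + ∑ m ∈ range (r + 1), c m • φ m :=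
      sub_eq_iff_eq_add'.mp hc
    rw [hθeq]
    congr 1
    have hre := Finset.sum_range_reflect (fun m => c m • φ m) (r + 1)
    simp only [Nat.add_sub_cancel] at hre
    rw [← hre, Fin.sum_univ_eq_sum_range (fun j => c (r - j) • φ (r - j)) (k - 1)]
    refine (Finset.sum_subset (Finset.range_subset_range.mpr (by omega)) ?_).symm
    intro m hm hnm
    have h1 : m < r + 1 := Finset.mem_range.mp hm
    have h2 : ¬ m < k - 1 := fun h => hnm (Finset.mem_range.mpr h)
    rw [hcz (r - m) (by omega), zero_smul]
  · rintro ⟨b, hb⟩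
    refine ⟨fun i => L (Lagrange.basis Finset.univ z i), ?_⟩
    intro f hf
    have hinj : Set.InjOn z (Finset.univ : Finset (Fin (r + 1))) :=
      fun a _ b _ h => hz h
    set ρ := f %ₘ θ with hρ
    set q := f /ₘ θ with hq
    have hfd : ρ + θ * q = f := modByMonic_add_div f θ
    have hθdegW : θ.degree = ((r + 1 : ℕ) : WithBot ℕ) := by
      rw [degree_eq_natDegree hθmonic.ne_zero, hθdeg]
    have hρdeg : ρ.degree < θ.degree := degree_modByMonic_lt f hθmonic
    -- `L (θ * q) = 0`
    have hLθq : L (θ * q) = 0 := by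
      by_cases hcase : f.natDegree < r + 1
      · have hq0 : q = 0 := by
          rw [hq, divByMonic_eq_zero_iff hθmonic, hθdegW]
          exact lt_of_le_of_lt (degree_le_natDegree) (by exact_mod_cast hcase)
        rw [hq0, mul_zero, map_zero]
      · push_neg at hcase
        have hqd : q.natDegree = f.natDegree - (r + 1) := by
          rw [hq, natDegree_divByMonic f hθmonic, hθdeg]
        have h1 : L (q * φ (r + 1)) = 0 :=
          orth_low L φ hmonic hdeg horth q (r + 1) (by omega)
        have h2 : ∀ j : Fin (k - 1), L (q * (b j • φ (r - (j : ℕ)))) = 0 := by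
          intro j
          have hj := j.isLt
          rw [mul_smul_comm, map_smul,
            orth_low L φ hmonic hdeg horth q (r - (j : ℕ)) (by omega), smul_zero]
        rw [mul_comm θ q, hb, mul_add, Finset.mul_sum, map_add, map_sum, h1,
          Finset.sum_eq_zero fun j _ => h2 j, add_zero]
    -- `L ρ` equals the quadrature sum for `ρ`
    have hρd2 : ρ.degree < ((Finset.univ : Finset (Fin (r + 1))).card : WithBot ℕ) := by
      rw [Finset.card_univ, Fintype.card_fin]
      rw [hθdegW] at hρdeg
      exact_mod_cast hρdeg
    have hρinterp := Lagrange.eq_interpolate hinj hρd2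
    have hLρ : L ρ = ∑ i, L (Lagrange.basis Finset.univ z i) * ρ.eval (z i) := by
      conv_lhs => rw [hρinterp]
      rw [Lagrange.interpolate_apply, map_sum]
      refine Finset.sum_congr rfl fun i _ => ?_
      rw [← smul_eq_C_mul, map_smul, smul_eq_mul, mul_comm]
    have heval : ∀ i, f.eval (z i) = ρ.eval (z i) := by
      intro i
      rw [← hfd, eval_add, eval_mul, hθeval, zero_mul, add_zero]
    calc ∑ i, L (Lagrange.basis Finset.univ z i) * f.eval (z i)
        = ∑ i, L (Lagrange.basis Finset.univ z i) * ρ.eval (z i) := by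
          exact Finset.sum_congr rfl fun i _ => by rw [heval]
      _ = L ρ := hLρ.symm
      _ = L ρ + L (θ * q) := by rw [hLθq, add_zero]
      _ = L f := by rw [← map_add, hfd]
end

section
/- (Newton polygon lemma.) Let K be a field equipped with a discrete additive valuation v : K → ℤ ∪ {∞} (with v(0) = ∞ and v(K^×) ⊆ ℤ). Let f(X) = ∑_{k=0}^{n} a_k X^{n−k} ∈ K[X] with a_0 ≠ 0 and v(a_k) ≥ 0 for all k, and suppose all zeros of f lie in K (i.e., f splits into linear factors over K, counted with multiplicity). Suppose 0 ≤ i < j ≤ n are indices with a_i ≠ 0 and a_j ≠ 0 such that for every k with 0 ≤ k ≤ n one has (j−i)·v(a_k) ≥ (j−k)·v(a_i) + (k−i)·v(a_j), with strict inequality whenever k < i or k > j (interpreting the inequality as holding when a_k = 0). Then (j−i) divides v(a_j) − v(a_i); that is, the slope of this edge of the Newton polygon of f is an integer. -/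
open Polynomial Finset

lemma np_list_sum_top (l : List (WithTop ℤ)) : l.sum = ⊤ ↔ ∃ x ∈ l, x = ⊤ := by
  induction l with
  | nil => simp
  | cons a l ih =>
    simp only [List.sum_cons, List.mem_cons, WithTop.add_eq_top, ih]
    constructor
    · rintro (h | ⟨x, hx, hx'⟩)
      · exact ⟨a, Or.inl rfl, h⟩
      · exact ⟨x, Or.inr hx, hx'⟩
    · rintro ⟨x, (rfl | hx), hx'⟩
      · exact Or.inl hx'
      · exact Or.inr ⟨x, hx, hx'⟩

lemma np_sum_take_le {M L : List (WithTop ℤ)} (h : M.Sublist L) :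
    M.Pairwise (· ≤ ·) → L.Pairwise (· ≤ ·) → (L.take M.length).sum ≤ M.sum := by
  induction h with
  | slnil => simp
  | @cons l₁ l₂ a h ih =>
    intro hM hL
    have hL' : l₂.Pairwise (· ≤ ·) := hL.of_cons
    refine le_trans ?_ (ih hM hL')
    rcases Nat.eq_zero_or_pos l₁.length with h0 | hpos
    · simp [h0]
    · obtain ⟨mm, hmmeq⟩ : ∃ mm, l₁.length = mm + 1 := ⟨l₁.length - 1, by omega⟩
      rw [hmmeq]
      have hmm : mm < l₂.length := by have := h.length_le; omega
      rw [List.take_succ_cons, List.sum_cons, List.sum_take_succ _ _ hmm]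
      have ha : a ≤ l₂.get ⟨mm, hmm⟩ := (List.pairwise_cons.mp hL).1 _ (l₂.get_mem _)
      calc a + (l₂.take mm).sum ≤ l₂.get ⟨mm, hmm⟩ + (l₂.take mm).sum :=
            add_le_add_left ha _
        _ = (l₂.take mm).sum + l₂.get ⟨mm, hmm⟩ := add_comm _ _
  | @cons_cons l₁ l₂ a h ih =>
    intro hM hL
    rw [List.length_cons, List.take_succ_cons, List.sum_cons, List.sum_cons]
    exact add_le_add_right (ih (List.pairwise_cons.mp hM).2 (List.pairwise_cons.mp hL).2) _

set_option maxHeartbeats 3200000 in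
open Polynomial Finset in
/-- Newton polygon lemma: if `f(X) = ∑_{k=0}^n a_k X^{n-k}` has all coefficients of
nonnegative valuation and splits into linear factors over `K`, then every edge of its
Newton polygon has integral slope.  Here `m k` records the valuation `v (a k)` of the
nonzero coefficients, and the hypotheses on `i < j` say that the segment joining
`(i, m i)` and `(j, m j)` is an edge of the Newton polygon. -/
theorem newton_polygon_integral_slope {K : Type*} [Field K]
    (v : AddValuation K (WithTop ℤ)) (hv : ∀ x : K, v x = ⊤ ↔ x = 0)
    (n : ℕ) (a : ℕ → K) (ha0 : a 0 ≠ 0)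
    (m : ℕ → ℤ) (hm : ∀ k ≤ n, a k ≠ 0 → v (a k) = (m k : WithTop ℤ))
    (hnonneg : ∀ k ≤ n, a k ≠ 0 → 0 ≤ m k)
    (c : Fin n → K)
    (hsplit : ∑ k ∈ Finset.range (n + 1), C (a k) * X ^ (n - k)
        = C (a 0) * ∏ i, (X - C (c i)))
    (i j : ℕ) (hij : i < j) (hjn : j ≤ n) (hai : a i ≠ 0) (haj : a j ≠ 0)
    (hedge : ∀ k ≤ n, a k ≠ 0 →
      ((j : ℤ) - (i : ℤ)) * m k ≥ ((j : ℤ) - (k : ℤ)) * m i + ((k : ℤ) - (i : ℤ)) * m j)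
    (hstrict : ∀ k ≤ n, a k ≠ 0 → (k < i ∨ j < k) →
      ((j : ℤ) - (i : ℤ)) * m k > ((j : ℤ) - (k : ℤ)) * m i + ((k : ℤ) - (i : ℤ)) * m j) :
    ((j : ℤ) - (i : ℤ)) ∣ (m j - m i) := by
  classical
  have hn0 : 0 < n := by omega
  have hin : i < n := by omega
  -- the multiset of roots and sorted list of valuations
  set t₀ : Multiset K := Finset.univ.val.map c with ht₀
  have hcard : Multiset.card t₀ = n := by simp [ht₀]
  set t : Multiset (WithTop ℤ) := t₀.map (fun x => v x) with ht
  set L : List (WithTop ℤ) := t.sort (· ≤ ·) with hLdef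
  have hLsorted : L.Pairwise (· ≤ ·) := Multiset.pairwise_sort _ _
  have hLcoe : (L : Multiset (WithTop ℤ)) = t := Multiset.sort_eq _ _
  have hLlen : L.length = n := by rw [hLdef, Multiset.length_sort]; simp [ht, hcard]
  set w : ℕ → WithTop ℤ := fun ℓ => L.getD ℓ ⊤ with hwdef
  set S : ℕ → WithTop ℤ := fun k => (L.take k).sum with hSdef
  have hwget : ∀ {ℓ : ℕ} (h : ℓ < n), w ℓ = L.get ⟨ℓ, by omega⟩ := by
    intro ℓ h
    simp only [hwdef]
    exact List.getD_eq_getElem L ⊤ (by omega)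
  have hwmono : ∀ {ℓ ℓ' : ℕ}, ℓ ≤ ℓ' → ℓ' < n → w ℓ ≤ w ℓ' := by
    intro ℓ ℓ' h h'
    rw [hwget (by omega), hwget h']
    exact hLsorted.rel_get_of_le (by simpa using h)
  have hwtop : ∀ {ℓ : ℕ}, n ≤ ℓ → w ℓ = ⊤ := by
    intro ℓ h
    simp only [hwdef]
    exact List.getD_eq_default L ⊤ (by omega)
  have hstep : ∀ {ℓ : ℕ}, ℓ < n → S (ℓ + 1) = S ℓ + w ℓ := by
    intro ℓ h
    simp only [hSdef]
    rw [List.sum_take_succ _ _ (by omega), hwget h]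
    rfl
  have hwmemtake : ∀ {r ℓ : ℕ}, ℓ < r → r ≤ n → w ℓ ∈ L.take r := by
    intro r ℓ h hr
    rw [hwget (by omega)]
    rw [List.mem_iff_get]
    refine ⟨⟨ℓ, by simp [List.length_take]; omega⟩, ?_⟩
    simp [List.get_eq_getElem, List.getElem_take]
  have hSfin_of : ∀ {r : ℕ}, r ≤ n → (∀ ℓ < r, w ℓ ≠ ⊤) → S r ≠ ⊤ := by
    intro r hr h htop
    obtain ⟨x, hx, hxt⟩ := (np_list_sum_top _).mp htop
    obtain ⟨ℓ, hℓ, hget⟩ := List.mem_iff_getElem.mp hx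
    have hℓr : ℓ < r := by simp [List.length_take] at hℓ; omega
    refine h ℓ hℓr ?_
    rw [hwget (by omega)]
    rw [← hget] at hxt
    simpa [List.get_eq_getElem, List.getElem_take] using hxt
  -- sum of k smallest is below any k-element sub-multiset
  have hSum : ∀ T : Multiset (WithTop ℤ), T ≤ t → S (Multiset.card T) ≤ T.sum := by
    intro T hT
    have hsub : (T.sort (· ≤ ·)).Sublist L := by
      apply List.sublist_of_subperm_of_pairwise _ (Multiset.pairwise_sort _ _) hLsorted
      rw [← Multiset.coe_le, Multiset.sort_eq, hLcoe]
      exact hT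
    have h := np_sum_take_le hsub (Multiset.pairwise_sort _ _) hLsorted
    have h1 : (T.sort (· ≤ ·)).length = Multiset.card T := Multiset.length_sort _
    have h2 : (T.sort (· ≤ ·)).sum = T.sum := by
      rw [← Multiset.sum_coe, Multiset.sort_eq]
    rw [h1, h2] at h
    exact h
  -- valuation facts
  have hvprod : ∀ T : Multiset K, v T.prod = (T.map (fun x => v x)).sum := by
    intro T
    induction T using Multiset.induction_on with
    | empty => simp
    | cons a s ih => simp [ih]
  have hvsum_le : ∀ (s : Multiset K) (g : WithTop ℤ), (∀ x ∈ s, g ≤ v x) → g ≤ v s.sum := by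
    intro s g hg
    induction s using Multiset.induction_on with
    | empty => simp
    | cons a s ih =>
      rw [Multiset.sum_cons]
      exact AddValuation.map_le_add v (hg a (Multiset.mem_cons_self a s))
        (ih (fun x hx => hg x (Multiset.mem_cons_of_mem hx)))
  have hesymm : ∀ (s : Multiset K) (u : ℕ) (g : WithTop ℤ),
      (∀ T : Multiset (WithTop ℤ), T ≤ s.map (fun x => v x) → Multiset.card T = u → g ≤ T.sum) →
      g ≤ v (Multiset.esymm s u) := by
    intro s u g hg
    apply hvsum_le
    intro x hx
    obtain ⟨T, hT, rfl⟩ := Multiset.mem_map.mp hx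
    obtain ⟨hTs, hTc⟩ := Multiset.mem_powersetCard.mp hT
    rw [hvprod]
    exact hg _ (Multiset.map_le_map hTs) (by simp [hTc])
  have hvsign : ∀ (e : ℕ) (x : K), v ((-1 : K) ^ e * x) = v x := by
    intro e x
    rw [AddValuation.map_mul, AddValuation.map_pow, AddValuation.map_neg,
      AddValuation.map_one, smul_zero, zero_add]
  -- the polynomial and its coefficients
  set G : Polynomial K := ∏ i, (X - C (c i)) with hGdef
  have hGprod : G = (t₀.map (fun r => X - C r)).prod := by
    rw [hGdef, Finset.prod_eq_multiset_prod, ht₀, Multiset.map_map]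
    rfl
  have hcoeff : ∀ k ≤ n, a k = a 0 * G.coeff (n - k) := by
    intro k hk
    have h1 := congrArg (fun p => Polynomial.coeff p (n - k)) hsplit
    simp only [Polynomial.finset_sum_coeff, Polynomial.coeff_C_mul, Polynomial.coeff_X_pow] at h1
    rw [Finset.sum_eq_single k] at h1
    · simpa using h1
    · intro k' hk' hne
      have : ¬ (n - k = n - k') := by
        simp only [Finset.mem_range] at hk'
        omega
      simp [this]
    · intro h
      exact absurd (Finset.mem_range.mpr (by omega)) h
  have hG : ∀ k ≤ n, v (a k) = v (a 0) + v (G.coeff (n - k)) := by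
    intro k hk
    rw [hcoeff k hk, AddValuation.map_mul]
  -- Lemma 1: lower bound for coefficient valuations
  have hlem1 : ∀ k ≤ n, S k ≤ v (G.coeff (n - k)) := by
    intro k hk
    have hcs : n - k ≤ Multiset.card t₀ := by omega
    rw [hGprod, Multiset.prod_X_sub_C_coeff t₀ hcs, hcard]
    have hnn : n - (n - k) = k := by omega
    rw [hnn, hvsign]
    apply hesymm
    intro T hT hTc
    have := hSum T (le_of_le_of_eq hT ht.symm)
    rwa [hTc] at this
  have hwfin_of : ∀ {r ℓ : ℕ}, r ≤ n → ℓ < r → S r ≠ ⊤ → w ℓ ≠ ⊤ := by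
    intro r ℓ hr hℓ hS htop
    exact hS ((np_list_sum_top _).mpr ⟨w ℓ, hwmemtake hℓ hr, htop⟩)
  -- Lemma 2 : equality at gaps
  have hlem2 : ∀ k, 0 < k → k ≤ n → w (k - 1) < w k → S k ≠ ⊤ →
      v (G.coeff (n - k)) = S k := by
    intro k hk0 hkn hgap hSfin
    have hwfin : ∀ ℓ < k, w ℓ ≠ ⊤ := fun ℓ hℓ => hwfin_of hkn hℓ hSfin
    have hSrfin : ∀ r ≤ k, S r ≠ ⊤ :=
      fun r hr => hSfin_of (by omega) (fun ℓ hℓ => hwfin ℓ (by omega))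
    set b := w (k - 1) with hbdef
    have hbfin : b ≠ ⊤ := hwfin (k - 1) (by omega)
    set A := Multiset.filter (fun x => v x ≤ b) t₀ with hAdef
    set B := Multiset.filter (fun x => ¬ v x ≤ b) t₀ with hBdef
    have hABsum : A + B = t₀ := Multiset.filter_add_not _ _
    have hmemw : ∀ x ∈ t, ∃ ℓ, ℓ < n ∧ x = w ℓ := by
      intro x hx
      rw [← hLcoe, Multiset.mem_coe] at hx
      obtain ⟨ℓ, hℓ, hget⟩ := List.mem_iff_getElem.mp hx
      refine ⟨ℓ, by omega, ?_⟩
      rw [hwget (by omega)]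
      simp [List.get_eq_getElem, hget]
    have hBge : ∀ x ∈ B, w k ≤ v x := by
      intro x hx
      rw [hBdef, Multiset.mem_filter] at hx
      obtain ⟨hxt, hxb⟩ := hx
      push_neg at hxb
      obtain ⟨ℓ, hℓ, hw⟩ := hmemw (v x) (by rw [ht]; exact Multiset.mem_map_of_mem _ hxt)
      rcases lt_or_ge ℓ k with h | h
      · have : w ℓ ≤ b := hwmono (show ℓ ≤ k - 1 by omega) (by omega)
        rw [← hw] at this
        exact absurd hxb (not_lt.mpr this)
      · rw [hw]; exact hwmono h hℓ
    -- the filtered list is the prefix of length k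
    have hfilterL : L.filter (fun x => decide (x ≤ b)) = L.take k := by
      conv_lhs => rw [← List.take_append_drop k L]
      rw [List.filter_append,
        List.filter_eq_self.mpr, List.filter_eq_nil_iff.mpr, List.append_nil]
      · intro x hx
        obtain ⟨ℓ, hℓ, hget⟩ := List.mem_iff_getElem.mp hx
        have hℓn : k + ℓ < n := by
          simp only [List.length_drop, hLlen] at hℓ; omega
        have : w (k + ℓ) = x := by
          rw [hwget hℓn, List.get_eq_getElem, ← hget, List.getElem_drop]
        intro hxb
        have hle : w k ≤ w (k + ℓ) := hwmono (by omega) hℓn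
        rw [this] at hle
        have : x ≤ b := by simpa using hxb
        exact absurd (lt_of_lt_of_le hgap (le_trans hle this)) (lt_irrefl b)
      · intro x hx
        obtain ⟨ℓ, hℓ, hget⟩ := List.mem_iff_getElem.mp hx
        have hℓk : ℓ < k ∧ ℓ < n := by
          simp only [List.length_take, hLlen] at hℓ; omega
        have : w ℓ = x := by
          rw [hwget hℓk.2, List.get_eq_getElem, ← hget, List.getElem_take]
        simp only [decide_eq_true_eq]
        rw [← this, hbdef]
        exact hwmono (by omega) (by omega)
    have hmapA : Multiset.map (fun x => v x) A = ↑(L.take k) := by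
      have h1 : Multiset.filter (fun y => y ≤ b) t = Multiset.map (fun x => v x) A := by
        rw [ht, Multiset.filter_map, hAdef]
        rfl
      rw [← h1, ← hLcoe, Multiset.filter_coe, hfilterL]
    have hcardA : Multiset.card A = k := by
      have := congrArg Multiset.card hmapA
      rw [Multiset.card_map, Multiset.coe_card, List.length_take, hLlen] at this
      omega
    have hsumA : (Multiset.map (fun x => v x) A).sum = S k := by
      rw [hmapA, Multiset.sum_coe]
    have hcardB : Multiset.card B = n - k := by
      have := congrArg Multiset.card hABsum
      rw [Multiset.card_add, hcardA, hcard] at this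
      omega
    set GA := (Multiset.map (fun r => X - C r) A).prod with hGAdef
    set GB := (Multiset.map (fun r => X - C r) B).prod with hGBdef
    have hGAB : G = GA * GB := by
      rw [hGprod, ← hABsum, Multiset.map_add, Multiset.prod_add]
    have hmonic : ∀ (s : Multiset K) (p : K[X]), p ∈ Multiset.map (fun r => X - C r) s →
        p.Monic := by
      intro s p hp
      obtain ⟨r, _, rfl⟩ := Multiset.mem_map.mp hp
      exact monic_X_sub_C r
    have hdeg : ∀ s : Multiset K,
        ((Multiset.map (fun r => X - C r) s).prod).natDegree = Multiset.card s := by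
      intro s
      rw [natDegree_multiset_prod_of_monic _ (hmonic s), Multiset.map_map]
      rw [show (natDegree ∘ fun r : K => X - C r) = fun _ : K => (1 : ℕ) from
        funext fun r => natDegree_X_sub_C r]
      rw [Multiset.map_const', Multiset.sum_replicate, smul_eq_mul, mul_one]
    have hGBmonic : GB.Monic := monic_multiset_prod_of_monic _ _ (fun r _ => monic_X_sub_C r)
    have hGBcoefftop : GB.coeff (n - k) = 1 := by
      have h1 : GB.natDegree = n - k := by rw [hGBdef, hdeg, hcardB]
      rw [← h1]
      exact hGBmonic.coeff_natDegree
    have hmainv : v (GA.coeff 0) = S k := by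
      rw [hGAdef, Polynomial.coeff_zero_eq_eval_zero, Polynomial.eval_multiset_prod,
        Multiset.map_map]
      rw [show ((Polynomial.eval 0 : K[X] → K) ∘ fun r : K => X - C r) = fun r : K => -r from
        funext fun r => by simp]
      rw [hvprod, Multiset.map_map]
      rw [show ((fun x => v x) ∘ fun r : K => -r) = fun x : K => v x from
        funext fun r => v.map_neg r]
      exact hsumA
    -- arithmetic helpers for nsmul on WithTop
    have hcoe_smul : ∀ (u : ℕ) (z : ℤ), (u • ((z : WithTop ℤ))) = (((u * z : ℤ) : WithTop ℤ)) := by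
      intro u z
      induction u with
      | zero => simp
      | succ u ih =>
        rw [succ_nsmul, ih, ← WithTop.coe_add]
        congr 1
        push_cast
        ring
    have hsmul_top : ∀ u : ℕ, 0 < u → (u • (⊤ : WithTop ℤ)) = ⊤ := by
      intro u hu
      cases u with
      | zero => omega
      | succ u => rw [succ_nsmul, add_top]
    have hSmono_step : ∀ u, 1 ≤ u → u ≤ k → S k ≤ S (k - u) + u • b := by
      intro u
      induction u with
      | zero => omega
      | succ u ih =>
        intro _ huk
        rcases Nat.eq_zero_or_pos u with rfl | hu
        · have hst := hstep (show k - 1 < n by omega)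
          rw [show k - 1 + 1 = k from by omega] at hst
          rw [hst, one_nsmul]
        · have ihh := ih (by omega) (by omega)
          have hst := hstep (show k - u - 1 < n by omega)
          rw [show k - u - 1 + 1 = k - u from by omega] at hst
          have hwb : w (k - u - 1) ≤ b := hwmono (by omega) (by omega)
          calc S k ≤ S (k - u) + u • b := ihh
            _ = S (k - u - 1) + w (k - u - 1) + u • b := by rw [hst]
            _ ≤ S (k - u - 1) + b + u • b := by
                exact add_le_add_left (add_le_add_right hwb _) _
            _ = S (k - (u + 1)) + (u + 1) • b := by
                rw [show k - (u + 1) = k - u - 1 from by omega, succ_nsmul, add_assoc,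
                  add_comm b (u • b), ← add_assoc, add_assoc]
    have hkey : ∀ u, 1 ≤ u → u ≤ k → S k < S (k - u) + u • w k := by
      intro u hu1 huk
      refine lt_of_le_of_lt (hSmono_step u hu1 huk) ?_
      apply WithTop.add_lt_add_left (hSrfin (k - u) (by omega))
      obtain ⟨bz, hbz⟩ := WithTop.ne_top_iff_exists.mp hbfin
      rcases eq_or_ne (w k) ⊤ with hwk | hwk
      · rw [hwk, hsmul_top u (by omega), ← hbz, hcoe_smul]
        exact WithTop.coe_lt_top _
      · obtain ⟨wz, hwz⟩ := WithTop.ne_top_iff_exists.mp hwk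
        rw [← hbz, ← hwz, hcoe_smul, hcoe_smul, WithTop.coe_lt_coe]
        have hbw : bz < wz := by
          rw [← WithTop.coe_lt_coe, hbz, hwz]
          exact hgap
        have hu' : (0 : ℤ) < (u : ℤ) := by exact_mod_cast hu1
        exact mul_lt_mul_of_pos_left hbw hu'
    -- the coefficient splits as main term + remainder
    have hmem0 : ((0 : ℕ), n - k) ∈ antidiagonal (n - k) := by simp
    have hsplitc : G.coeff (n - k) = GA.coeff 0 * GB.coeff (n - k)
        + ∑ p ∈ (antidiagonal (n - k)).erase (0, n - k), GA.coeff p.1 * GB.coeff p.2 := by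
      rw [hGAB, Polynomial.coeff_mul, ← Finset.add_sum_erase _ _ hmem0]
    have hrest : ∀ p ∈ (antidiagonal (n - k)).erase (0, n - k),
        S k < v (GA.coeff p.1 * GB.coeff p.2) := by
      intro p hp
      obtain ⟨hpne, hpmem⟩ := Finset.mem_erase.mp hp
      have hpsum : p.1 + p.2 = n - k := Finset.HasAntidiagonal.mem_antidiagonal.mp hpmem
      have hp1 : 1 ≤ p.1 := by
        rcases Nat.eq_zero_or_pos p.1 with h0 | h
        · exact absurd (Prod.ext h0 (by omega)) hpne
        · exact h
      rw [AddValuation.map_mul]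
      rcases le_or_gt p.1 k with hpk | hpk
      · have hAt : Multiset.map (fun x => v x) A ≤ t := by
          rw [ht, hAdef]
          exact Multiset.map_le_map (Multiset.filter_le _ _)
        have e1 : S (k - p.1) ≤ v (GA.coeff p.1) := by
          have hc : p.1 ≤ Multiset.card A := by omega
          rw [hGAdef, Multiset.prod_X_sub_C_coeff A hc, hcardA, hvsign]
          apply hesymm
          intro T hT hTc
          have := hSum T (le_trans hT hAt)
          rwa [hTc] at this
        have e2 : p.1 • w k ≤ v (GB.coeff p.2) := by
          have hc : p.2 ≤ Multiset.card B := by omega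
          have hidx : Multiset.card B - p.2 = p.1 := by omega
          rw [hGBdef, Multiset.prod_X_sub_C_coeff B hc, hidx, hvsign]
          apply hesymm
          intro T hT hTc
          have hel : ∀ x ∈ T, w k ≤ x := by
            intro x hx
            obtain ⟨y, hy, rfl⟩ := Multiset.mem_map.mp (Multiset.mem_of_le hT hx)
            exact hBge y hy
          calc p.1 • w k = Multiset.card T • w k := by rw [hTc]
            _ ≤ T.sum := Multiset.card_nsmul_le_sum hel
        calc S k < S (k - p.1) + p.1 • w k := hkey p.1 hp1 hpk
          _ ≤ v (GA.coeff p.1) + v (GB.coeff p.2) := add_le_add e1 e2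
      · have h0 : GA.coeff p.1 = 0 :=
          Polynomial.coeff_eq_zero_of_natDegree_lt (by rw [hGAdef, hdeg, hcardA]; exact hpk)
        rw [h0, AddValuation.map_zero, top_add]
        exact lt_top_iff_ne_top.mpr hSfin
    rw [hsplitc, hGBcoefftop, mul_one]
    rw [AddValuation.map_add_eq_of_lt_left]
    · exact hmainv
    · rw [hmainv]
      exact AddValuation.map_lt_sum' v (lt_top_iff_ne_top.mpr hSfin) hrest
  -- ===== main argument =====
  have hm0 : v (a 0) = ((m 0 : ℤ) : WithTop ℤ) := hm 0 (by omega) ha0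
  have hlow : ∀ k ≤ n, ((m 0 : ℤ) : WithTop ℤ) + S k ≤ v (a k) := by
    intro k hk
    rw [hG k hk, ← hm0]
    exact add_le_add_right (hlem1 k hk) _
  have hSj : S j ≠ ⊤ := by
    intro htop
    have h1 := hlow j hjn
    rw [htop, add_top, hm j hjn haj, top_le_iff] at h1
    exact WithTop.coe_ne_top h1
  have hwj : ∀ ℓ < j, w ℓ ≠ ⊤ := fun ℓ hℓ => hwfin_of hjn hℓ hSj
  obtain ⟨W, hWdef⟩ : ∃ W : ℕ → ℤ, W = fun ℓ => (w ℓ).untopD 0 := ⟨_, rfl⟩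
  have hWcoe : ∀ {ℓ : ℕ}, w ℓ ≠ ⊤ → w ℓ = ((W ℓ : ℤ) : WithTop ℤ) := by
    intro ℓ h
    obtain ⟨z, hz⟩ := WithTop.ne_top_iff_exists.mp h
    simp only [hWdef, ← hz, WithTop.untopD_coe]
  obtain ⟨σ, hσdef⟩ : ∃ σ : ℕ → ℤ, σ = fun r => ∑ ℓ ∈ Finset.range r, W ℓ := ⟨_, rfl⟩
  have hσ0 : σ 0 = 0 := by simp [hσdef]
  have hσsucc : ∀ r, σ (r + 1) = σ r + W r := by
    intro r; simp [hσdef, Finset.sum_range_succ]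
  have hσIco : ∀ r₁ r₂, r₁ ≤ r₂ → σ r₂ - σ r₁ = ∑ ℓ ∈ Finset.Ico r₁ r₂, W ℓ := by
    intro r₁ r₂ h
    simp only [hσdef]
    exact (Finset.sum_Ico_eq_sub _ h).symm
  have hSσ : ∀ r ≤ n, (∀ ℓ < r, w ℓ ≠ ⊤) → S r = ((σ r : ℤ) : WithTop ℤ) := by
    intro r
    induction r with
    | zero => intro _ _; simp [hSdef, hσ0]
    | succ r ih =>
      intro hr hfin
      rw [hstep (by omega), ih (by omega) (fun ℓ hℓ => hfin ℓ (by omega)),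
        hWcoe (hfin r (by omega)), ← WithTop.coe_add, hσsucc]
  have hlowz : ∀ k ≤ n, a k ≠ 0 → (∀ ℓ < k, w ℓ ≠ ⊤) → m 0 + σ k ≤ m k := by
    intro k hk hak hfin
    have h1 := hlow k hk
    rw [hm k hk hak, hSσ k hk hfin, ← WithTop.coe_add] at h1
    exact_mod_cast h1
  have heq : ∀ k, 0 < k → k ≤ n → w (k - 1) < w k → (∀ ℓ < k, w ℓ ≠ ⊤) →
      a k ≠ 0 ∧ m k = m 0 + σ k := by
    intro k hk0 hkn hgap hfin
    have hSk : S k = ((σ k : ℤ) : WithTop ℤ) := hSσ k hkn hfin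
    have h2 := hlem2 k hk0 hkn hgap (by rw [hSk]; exact WithTop.coe_ne_top)
    have h3 : v (a k) = ((m 0 + σ k : ℤ) : WithTop ℤ) := by
      rw [hG k hkn, h2, hm0, hSk, ← WithTop.coe_add]
    have h4 : a k ≠ 0 := by
      intro h0
      rw [(hv (a k)).mpr h0] at h3
      exact WithTop.coe_ne_top h3.symm
    refine ⟨h4, ?_⟩
    have h5 := hm k hkn h4
    rw [h5] at h3
    exact_mod_cast h3
  -- no gap strictly inside (i, j)
  have hng : ∀ k, i < k → k < j → ¬ (w (k - 1) < w k) := by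
    intro k hik hkj hgap
    have hfin : ∀ ℓ < k, w ℓ ≠ ⊤ := fun ℓ hℓ => hwj ℓ (by omega)
    obtain ⟨hak, hmk⟩ := heq k (by omega) (by omega) hgap hfin
    have hσi : m 0 + σ i ≤ m i := hlowz i (by omega) hai (fun ℓ hℓ => hwj ℓ (by omega))
    have hσj : m 0 + σ j ≤ m j := hlowz j hjn haj hwj
    have hE := hedge k (by omega) hak
    have c1 : σ k - σ i ≤ ((k : ℤ) - i) * W (k - 1) := by
      rw [hσIco i k (by omega)]
      have h2 : ∑ ℓ ∈ Finset.Ico i k, W ℓ ≤ (Finset.Ico i k).card • W (k - 1) := by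
        apply Finset.sum_le_card_nsmul
        intro ℓ hℓ
        rw [Finset.mem_Ico] at hℓ
        have h3 := hwmono (show ℓ ≤ k - 1 by omega) (show k - 1 < n by omega)
        rw [hWcoe (hwj ℓ (by omega)), hWcoe (hwj (k - 1) (by omega))] at h3
        exact_mod_cast h3
      refine le_trans h2 ?_
      rw [Nat.card_Ico, nsmul_eq_mul]
      have hc : ((k - i : ℕ) : ℤ) = (k : ℤ) - i := by omega
      rw [hc]
    have c2 : ((j : ℤ) - k) * W k ≤ σ j - σ k := by
      rw [hσIco k j (by omega)]
      have h2 : (Finset.Ico k j).card • W k ≤ ∑ ℓ ∈ Finset.Ico k j, W ℓ := by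
        apply Finset.card_nsmul_le_sum
        intro ℓ hℓ
        rw [Finset.mem_Ico] at hℓ
        have h3 := hwmono (show k ≤ ℓ by omega) (show ℓ < n by omega)
        rw [hWcoe (hwj k (by omega)), hWcoe (hwj ℓ (by omega))] at h3
        exact_mod_cast h3
      refine le_trans ?_ h2
      rw [Nat.card_Ico, nsmul_eq_mul]
      have hc : ((j - k : ℕ) : ℤ) = (j : ℤ) - k := by omega
      rw [hc]
    have c3 : W (k - 1) < W k := by
      have h3 := hgap
      rw [hWcoe (hwj (k - 1) (by omega)), hWcoe (hwj k (by omega))] at h3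
      exact_mod_cast h3
    have hik' : (0 : ℤ) < (k : ℤ) - i := by push_cast; omega
    have hkj' : (0 : ℤ) < (j : ℤ) - k := by push_cast; omega
    have g5 := mul_le_mul_of_nonneg_left hσi (le_of_lt hkj')
    have g6 := mul_le_mul_of_nonneg_left hσj (le_of_lt hik')
    have g7 := mul_le_mul_of_nonneg_left c1 (le_of_lt hkj')
    have g8 := mul_le_mul_of_nonneg_left c2 (le_of_lt hik')
    have g9 := mul_lt_mul_of_pos_left c3 (mul_pos hik' hkj')
    nlinarith [hE, hmk, g5, g6, g7, g8, g9]
  have hμfin : w i ≠ ⊤ := hwj i hij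
  have hblock : ∀ ℓ, i ≤ ℓ → ℓ < j → w ℓ = w i := by
    intro ℓ hiℓ
    induction ℓ, hiℓ using Nat.le_induction with
    | base => intro _; rfl
    | succ ℓ hiℓ ih =>
      intro hℓj
      have h1 : w ℓ = w i := ih (by omega)
      have h2 : ¬ w (ℓ + 1 - 1) < w (ℓ + 1) := hng (ℓ + 1) (by omega) hℓj
      simp only [Nat.add_sub_cancel] at h2
      have h3 : w ℓ ≤ w (ℓ + 1) := hwmono (by omega) (by omega)
      have h4 : w (ℓ + 1) ≤ w ℓ := not_lt.mp h2
      rw [← h1]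
      exact le_antisymm h4 h3
  have hk₁ex : ∃ ℓ, w ℓ = w i := ⟨i, rfl⟩
  obtain ⟨k₁, hk₁spec, hk₁min⟩ :
      ∃ k, w k = w i ∧ ∀ ℓ < k, w ℓ ≠ w i :=
    ⟨Nat.find hk₁ex, Nat.find_spec hk₁ex, fun ℓ h => Nat.find_min hk₁ex h⟩
  have hk₁i : k₁ ≤ i := by
    by_contra h
    exact hk₁min i (by omega) rfl
  have hk₁gap : 0 < k₁ → w (k₁ - 1) < w k₁ := by
    intro h
    have h1 : w (k₁ - 1) ≠ w i := hk₁min (k₁ - 1) (by omega)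
    have h2 : w (k₁ - 1) ≤ w k₁ := hwmono (by omega) (by omega)
    exact lt_of_le_of_ne h2 (by rw [hk₁spec]; exact h1)
  have hk₂ex : ∃ ℓ, i ≤ ℓ ∧ (ℓ = n ∨ w ℓ ≠ w i) := ⟨n, by omega, Or.inl rfl⟩
  obtain ⟨k₂, hk₂spec, hk₂min⟩ :
      ∃ k, (i ≤ k ∧ (k = n ∨ w k ≠ w i)) ∧ ∀ ℓ < k, ¬ (i ≤ ℓ ∧ (ℓ = n ∨ w ℓ ≠ w i)) :=
    ⟨Nat.find hk₂ex, Nat.find_spec hk₂ex, fun ℓ h => Nat.find_min hk₂ex h⟩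
  have hk₂n : k₂ ≤ n := by
    by_contra h
    exact hk₂min n (by omega) ⟨by omega, Or.inl rfl⟩
  have hik₂ : i < k₂ := by
    rcases eq_or_lt_of_le hk₂spec.1 with h | h
    · exfalso
      rcases hk₂spec.2 with h2 | h2
      · omega
      · exact h2 (by rw [← h])
    · exact h
  have hblock₂ : ∀ ℓ, i ≤ ℓ → ℓ < k₂ → w ℓ = w i := by
    intro ℓ h1 h2
    have h3 := hk₂min ℓ h2
    push_neg at h3
    exact (h3 h1).2
  have hjk₂ : j ≤ k₂ := by
    by_contra h
    push_neg at h
    have h1 := hblock k₂ (by omega) h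
    rcases hk₂spec.2 with h2 | h2
    · omega
    · exact h2 h1
  have hblockfull : ∀ ℓ, k₁ ≤ ℓ → ℓ < k₂ → w ℓ = w i := by
    intro ℓ h1 h2
    rcases le_or_gt i ℓ with h3 | h3
    · exact hblock₂ ℓ h3 h2
    · have h4 : w k₁ ≤ w ℓ := hwmono h1 (by omega)
      have h5 : w ℓ ≤ w i := hwmono (by omega) hin
      rw [hk₁spec] at h4
      exact le_antisymm h5 h4
  have hwfin₂ : ∀ ℓ < k₂, w ℓ ≠ ⊤ := by
    intro ℓ hℓ
    rcases lt_or_ge ℓ j with h | h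
    · exact hwj ℓ h
    · rw [hblockfull ℓ (by omega) hℓ]
      exact hμfin
  have hk₂gap : w (k₂ - 1) < w k₂ := by
    have hw1 : w (k₂ - 1) = w i := hblockfull (k₂ - 1) (by omega) (by omega)
    rcases eq_or_lt_of_le hk₂n with h | h
    · rw [hw1, hwtop (show n ≤ k₂ by omega)]
      exact lt_top_iff_ne_top.mpr hμfin
    · have h2 : w k₂ ≠ w i := by
        rcases hk₂spec.2 with h3 | h3
        · omega
        · exact h3
      have h3 : w (k₂ - 1) ≤ w k₂ := hwmono (by omega) h
      exact lt_of_le_of_ne h3 (by rw [hw1]; exact fun hh => h2 hh.symm)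
  have hA1 : a k₁ ≠ 0 ∧ m k₁ = m 0 + σ k₁ := by
    rcases Nat.eq_zero_or_pos k₁ with h0 | h0
    · rw [h0, hσ0]
      exact ⟨ha0, by ring⟩
    · exact heq k₁ h0 (by omega) (hk₁gap h0) (fun ℓ hℓ => hwfin₂ ℓ (by omega))
  have hA2 : a k₂ ≠ 0 ∧ m k₂ = m 0 + σ k₂ := heq k₂ (by omega) hk₂n hk₂gap hwfin₂
  have hWblock : ∀ ℓ, k₁ ≤ ℓ → ℓ < k₂ → W ℓ = W i := by
    intro ℓ h1 h2
    simp only [hWdef]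
    rw [hblockfull ℓ h1 h2]
  have hσblock : ∀ r, k₁ ≤ r → r ≤ k₂ → σ r = σ k₁ + ((r : ℤ) - k₁) * W i := by
    intro r h1 h2
    have h3 := hσIco k₁ r h1
    have h4 : ∑ ℓ ∈ Finset.Ico k₁ r, W ℓ = ∑ ℓ ∈ Finset.Ico k₁ r, W i :=
      Finset.sum_congr rfl (fun ℓ hℓ => by
        rw [Finset.mem_Ico] at hℓ
        exact hWblock ℓ hℓ.1 (by omega))
    rw [h4, Finset.sum_const, Nat.card_Ico, nsmul_eq_mul] at h3
    have hc : ((r - k₁ : ℕ) : ℤ) = (r : ℤ) - k₁ := by omega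
    rw [hc] at h3
    linarith
  have hMi : m 0 + σ i ≤ m i := hlowz i (by omega) hai (fun ℓ hℓ => hwj ℓ (by omega))
  have hMj : m 0 + σ j ≤ m j := hlowz j hjn haj hwj
  obtain ⟨x, hxdef⟩ : ∃ x : ℤ, x = m i - (m 0 + σ k₁ + ((i : ℤ) - k₁) * W i) := ⟨_, rfl⟩
  obtain ⟨y, hydef⟩ : ∃ y : ℤ, y = m j - (m 0 + σ k₁ + ((j : ℤ) - k₁) * W i) := ⟨_, rfl⟩
  have hx : 0 ≤ x := by
    have h1 := hσblock i hk₁i (by omega)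
    rw [hxdef]
    linarith
  have hy : 0 ≤ y := by
    have h1 := hσblock j (by omega) hjk₂
    rw [hydef]
    linarith
  have hmi' : m i = m 0 + σ k₁ + ((i : ℤ) - k₁) * W i + x := by rw [hxdef]; ring
  have hmj' : m j = m 0 + σ k₁ + ((j : ℤ) - k₁) * W i + y := by rw [hydef]; ring
  have hmk₂' : m k₂ = m 0 + σ k₁ + ((k₂ : ℤ) - k₁) * W i := by
    rw [hA2.2, hσblock k₂ (by omega) le_rfl]
    ring
  have hk₁eq : k₁ = i := by
    by_contra hne
    have hk₁lt : k₁ < i := by omega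
    have E1 := hstrict k₁ (by omega) hA1.1 (Or.inl hk₁lt)
    rw [hA1.2, hmi', hmj'] at E1
    have h1 : ((j : ℤ) - k₁) * x < ((i : ℤ) - k₁) * y := by linarith [E1]
    have hyp : 0 < y := by
      rcases lt_or_ge 0 y with h | h
      · exact h
      · exfalso
        have h2 : ((i : ℤ) - k₁) * y ≤ 0 :=
          mul_nonpos_of_nonneg_of_nonpos (by push_cast; omega) h
        have h3 : 0 ≤ ((j : ℤ) - k₁) * x := mul_nonneg (by push_cast; omega) hx
        linarith
    rcases eq_or_lt_of_le hjk₂ with hk₂j | hk₂j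
    · have h2 := hmk₂'
      rw [← hk₂j] at h2
      have hy0 : y = 0 := by rw [hydef]; linarith
      linarith
    · have E2 := hstrict k₂ hk₂n hA2.1 (Or.inr hk₂j)
      rw [hmk₂', hmi', hmj'] at E2
      have h2 : ((k₂ : ℤ) - i) * y < ((k₂ : ℤ) - j) * x := by linarith [E2]
      have hxp : 0 < x := by
        rcases lt_or_ge 0 x with h | h
        · exact h
        · exfalso
          have h3 : ((k₂ : ℤ) - j) * x ≤ 0 :=
            mul_nonpos_of_nonneg_of_nonpos (by push_cast; omega) h
          have h4 : 0 < ((k₂ : ℤ) - i) * y := mul_pos (by push_cast; omega) hyp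
          linarith
      have hcp1 : (0 : ℤ) < (i : ℤ) - k₁ := by push_cast; omega
      have hcp2 : (0 : ℤ) < (k₂ : ℤ) - j := by push_cast; omega
      have hji : (0 : ℤ) < (j : ℤ) - i := by push_cast; omega
      have g1 := mul_lt_mul_of_pos_left h1 hcp2
      have g2 := mul_lt_mul_of_pos_left h2 hcp1
      have g3 : 0 ≤ ((k₂ : ℤ) - j) * (((j : ℤ) - i) * x) :=
        mul_nonneg (le_of_lt hcp2) (mul_nonneg (le_of_lt hji) (le_of_lt hxp))
      have g4 : 0 < ((i : ℤ) - k₁) * (((j : ℤ) - i) * y) :=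
        mul_pos hcp1 (mul_pos hji hyp)
      nlinarith [g1, g2, g3, g4]
  have hx0 : x = 0 := by
    have h1 := hA1.2
    rw [hk₁eq] at h1
    rw [hxdef, hk₁eq, h1]
    ring
  have hk₂eq : j = k₂ := by
    rcases eq_or_lt_of_le hjk₂ with h | h
    · exact h
    · exfalso
      have E2 := hstrict k₂ hk₂n hA2.1 (Or.inr h)
      rw [hmk₂', hmi', hmj'] at E2
      have h2 : ((k₂ : ℤ) - i) * y < ((k₂ : ℤ) - j) * x := by linarith [E2]
      rw [hx0, mul_zero] at h2
      have h3 : 0 ≤ ((k₂ : ℤ) - i) * y := mul_nonneg (by push_cast; omega) hy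
      linarith
  refine ⟨W i, ?_⟩
  have hmj2 : m j = m 0 + σ k₁ + ((j : ℤ) - k₁) * W i := by
    have h1 := hmk₂'
    rw [← hk₂eq] at h1
    exact h1
  have hmi2 : m i = m 0 + σ k₁ + ((i : ℤ) - k₁) * W i := by
    rw [hmi', hx0, add_zero]
  rw [hmi2, hmj2]
  ring
end

section
/- (Christoffel–Darboux formula.) Let L be a moment functional on ℂ[X] and let (Φ_l)_{l≥0} be a family of orthogonal polynomials for L, with deg Φ_l = l, L(Φ_l·Φ_m) = 0 for l ≠ m, and h_l := L(Φ_l²) ≠ 0 for every l. Let k_l denote the leading coefficient of Φ_l. Then for every l ≥ 0 and all x, y ∈ ℂ with x ≠ y, ∑_{n=0}^{l} (h_l/h_n)·Φ_n(x)·Φ_n(y) = (k_l/k_{l+1}) · (Φ_{l+1}(x)Φ_l(y) − Φ_l(x)Φ_{l+1}(y)) / (x − y). -/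
open Polynomial Finset

lemma cd_aux_orth_small (L : Polynomial ℂ →ₗ[ℂ] ℂ) (Φ : ℕ → Polynomial ℂ)
    (hdeg : ∀ l, (Φ l).natDegree = l)
    (horth : ∀ l m, l ≠ m → L (Φ l * Φ m) = 0)
    (hnonzero : ∀ l, L (Φ l ^ 2) ≠ 0) :
    ∀ d (p : Polynomial ℂ), p.natDegree ≤ d → ∀ m, d < m → L (Φ m * p) = 0 := by
  have hne : ∀ n, Φ n ≠ 0 := by
    intro n h
    exact hnonzero n (by simp [h])
  have hlead : ∀ n, (Φ n).leadingCoeff ≠ 0 := fun n => leadingCoeff_ne_zero.mpr (hne n)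
  intro d
  induction d with
  | zero =>
    intro p hp m hm
    have h0 : Φ 0 = C ((Φ 0).coeff 0) := eq_C_of_natDegree_le_zero (by rw [hdeg])
    have hp0 : p = C (p.coeff 0) := eq_C_of_natDegree_le_zero hp
    have hc0 : (Φ 0).coeff 0 ≠ 0 := by
      intro h
      apply hne 0
      rw [h0, h, map_zero]
    have key : p = (p.coeff 0 / (Φ 0).coeff 0) • Φ 0 := by
      conv_lhs => rw [hp0]
      rw [h0, smul_C, smul_eq_mul, coeff_C_zero, div_mul_cancel₀ _ hc0]
    rw [key, mul_smul_comm, map_smul, horth m 0 (by omega), smul_zero]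
  | succ d ih =>
    intro p hp m hm
    set c : ℂ := p.coeff (d+1) / (Φ (d+1)).leadingCoeff with hc
    have hcoeff : (Φ (d+1)).coeff (d+1) = (Φ (d+1)).leadingCoeff := by
      rw [leadingCoeff, hdeg]
    have hq : (p - c • Φ (d+1)).natDegree ≤ d := by
      rw [natDegree_le_iff_coeff_eq_zero]
      intro i hi
      rw [coeff_sub, coeff_smul, smul_eq_mul]
      rcases eq_or_lt_of_le (Nat.succ_le_of_lt hi) with h | h
      · rw [← h, hcoeff, hc, div_mul_cancel₀ _ (hlead (d+1)), sub_self]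
      · rw [coeff_eq_zero_of_natDegree_lt (lt_of_le_of_lt hp h),
          coeff_eq_zero_of_natDegree_lt (by rw [hdeg]; exact h), mul_zero, sub_zero]
    have hsplit : Φ m * p = Φ m * (p - c • Φ (d+1)) + c • (Φ m * Φ (d+1)) := by
      rw [mul_sub, mul_smul_comm]; ring
    rw [hsplit, map_add, map_smul, ih _ hq m (by omega), horth m (d+1) (by omega),
      smul_zero, add_zero]

lemma cd_aux_orth_lt (L : Polynomial ℂ →ₗ[ℂ] ℂ) (Φ : ℕ → Polynomial ℂ)
    (hdeg : ∀ l, (Φ l).natDegree = l)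
    (horth : ∀ l m, l ≠ m → L (Φ l * Φ m) = 0)
    (hnonzero : ∀ l, L (Φ l ^ 2) ≠ 0) :
    ∀ m (p : Polynomial ℂ), p.natDegree < m → L (Φ m * p) = 0 := fun m p h =>
  cd_aux_orth_small L Φ hdeg horth hnonzero p.natDegree p le_rfl m h

lemma cd_aux_top (L : Polynomial ℂ →ₗ[ℂ] ℂ) (Φ : ℕ → Polynomial ℂ)
    (hdeg : ∀ l, (Φ l).natDegree = l)
    (horth : ∀ l m, l ≠ m → L (Φ l * Φ m) = 0)
    (hnonzero : ∀ l, L (Φ l ^ 2) ≠ 0)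
    (p : Polynomial ℂ) (hp : p ≠ 0) : L (Φ p.natDegree * p) ≠ 0 := by
  have hne : ∀ n, Φ n ≠ 0 := fun n h => hnonzero n (by simp [h])
  have hlead : ∀ n, (Φ n).leadingCoeff ≠ 0 := fun n => leadingCoeff_ne_zero.mpr (hne n)
  set d := p.natDegree with hd
  set c : ℂ := p.leadingCoeff / (Φ d).leadingCoeff with hc
  have hcoeff : (Φ d).coeff d = (Φ d).leadingCoeff := by rw [leadingCoeff, hdeg]
  set q := p - c • Φ d with hqdef
  have hqc : q.coeff d = 0 := by
    rw [hqdef, coeff_sub, coeff_smul, smul_eq_mul, hcoeff, hc,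
      div_mul_cancel₀ _ (hlead d)]
    rw [show p.coeff d = p.leadingCoeff from by rw [leadingCoeff, ← hd], sub_self]
  have hLq : L (Φ d * q) = 0 := by
    rcases eq_or_ne q 0 with h | h
    · rw [h, mul_zero, map_zero]
    · apply cd_aux_orth_lt L Φ hdeg horth hnonzero
      have hle : q.natDegree ≤ d :=
        le_trans (natDegree_sub_le _ _) (max_le le_rfl ((natDegree_smul_le c (Φ d)).trans (hdeg d).le))
      rcases eq_or_lt_of_le hle with he | hlt
      · exact absurd (by rw [← he] at hqc; exact leadingCoeff_eq_zero.mp hqc) h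
      · exact hlt
  have hsplit : Φ d * p = Φ d * q + c • (Φ d ^ 2) := by
    rw [hqdef, mul_sub, mul_smul_comm, sq]; ring
  rw [hsplit, map_add, map_smul, hLq, zero_add, smul_eq_mul]
  exact mul_ne_zero (div_ne_zero (leadingCoeff_ne_zero.mpr hp) (hlead d)) (hnonzero d)

lemma cd_aux_LC (L : Polynomial ℂ →ₗ[ℂ] ℂ) (a : ℂ) (p : Polynomial ℂ) :
    L (C a * p) = a * L p := by
  rw [← smul_eq_C_mul, map_smul, smul_eq_mul]

lemma cd_aux_rec0 (L : Polynomial ℂ →ₗ[ℂ] ℂ) (Φ : ℕ → Polynomial ℂ)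
    (hdeg : ∀ l, (Φ l).natDegree = l)
    (horth : ∀ l m, l ≠ m → L (Φ l * Φ m) = 0)
    (hnonzero : ∀ l, L (Φ l ^ 2) ≠ 0) :
    X * Φ 0 = C ((Φ 0).leadingCoeff / (Φ 1).leadingCoeff) * Φ 1
      + C (L (X * Φ 0 * Φ 0) / L (Φ 0 ^ 2)) * Φ 0 := by
  have hne : ∀ n, Φ n ≠ 0 := fun n h => hnonzero n (by simp [h])
  have hlead : ∀ n, (Φ n).leadingCoeff ≠ 0 := fun n => leadingCoeff_ne_zero.mpr (hne n)
  have hcoeff : ∀ n, (Φ n).coeff n = (Φ n).leadingCoeff := fun n => by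
    rw [leadingCoeff, hdeg]
  set a : ℂ := (Φ 0).leadingCoeff / (Φ 1).leadingCoeff with ha
  set b : ℂ := L (X * Φ 0 * Φ 0) / L (Φ 0 ^ 2) with hb
  set s : Polynomial ℂ := X * Φ 0 - (C a * Φ 1 + C b * Φ 0) with hs
  have hzero : s = 0 := by
    by_contra hns
    apply cd_aux_top L Φ hdeg horth hnonzero s hns
    have hdegs : s.natDegree ≤ 0 := by
      rw [natDegree_le_iff_coeff_eq_zero]
      intro i hi
      obtain ⟨i', rfl⟩ : ∃ i', i = i' + 1 := ⟨i - 1, by omega⟩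
      rw [hs, coeff_sub, coeff_add, coeff_C_mul, coeff_C_mul, coeff_X_mul]
      rcases Nat.eq_zero_or_pos i' with rfl | h
      · rw [hcoeff 0, show (Φ 1).coeff 1 = (Φ 1).leadingCoeff from hcoeff 1,
          ha, div_mul_cancel₀ _ (hlead 1),
          coeff_eq_zero_of_natDegree_lt (by rw [hdeg]; omega)]
        ring
      · rw [coeff_eq_zero_of_natDegree_lt (by rw [hdeg]; omega),
          coeff_eq_zero_of_natDegree_lt (by rw [hdeg]; omega),
          coeff_eq_zero_of_natDegree_lt (by rw [hdeg]; omega)]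
        ring
    have hj : L (Φ 0 * s) = 0 := by
      have hexp : Φ 0 * s = X * Φ 0 * Φ 0 - (C a * (Φ 0 * Φ 1) + C b * (Φ 0 ^ 2)) := by
        rw [hs]; ring
      rw [hexp, map_sub, map_add, cd_aux_LC, cd_aux_LC, horth 0 1 (by omega)]
      rw [hb, div_mul_cancel₀ _ (hnonzero 0)]
      ring
    rw [Nat.le_zero.mp hdegs]
    exact hj
  exact sub_eq_zero.mp hzero

lemma cd_aux_recS (L : Polynomial ℂ →ₗ[ℂ] ℂ) (Φ : ℕ → Polynomial ℂ)
    (hdeg : ∀ l, (Φ l).natDegree = l)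
    (horth : ∀ l m, l ≠ m → L (Φ l * Φ m) = 0)
    (hnonzero : ∀ l, L (Φ l ^ 2) ≠ 0) (n : ℕ) :
    X * Φ (n + 1) = C ((Φ (n+1)).leadingCoeff / (Φ (n+2)).leadingCoeff) * Φ (n+2)
      + C (L (X * Φ (n+1) * Φ (n+1)) / L (Φ (n+1) ^ 2)) * Φ (n+1)
      + C (L (X * Φ (n+1) * Φ n) / L (Φ n ^ 2)) * Φ n := by
  have hne : ∀ m, Φ m ≠ 0 := fun m h => hnonzero m (by simp [h])
  have hlead : ∀ m, (Φ m).leadingCoeff ≠ 0 := fun m => leadingCoeff_ne_zero.mpr (hne m)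
  have hcoeff : ∀ m, (Φ m).coeff m = (Φ m).leadingCoeff := fun m => by
    rw [leadingCoeff, hdeg]
  set a : ℂ := (Φ (n+1)).leadingCoeff / (Φ (n+2)).leadingCoeff with ha
  set b : ℂ := L (X * Φ (n+1) * Φ (n+1)) / L (Φ (n+1) ^ 2) with hb
  set c : ℂ := L (X * Φ (n+1) * Φ n) / L (Φ n ^ 2) with hc
  set s : Polynomial ℂ := X * Φ (n+1) - (C a * Φ (n+2) + C b * Φ (n+1) + C c * Φ n)
    with hs
  have hzero : s = 0 := by
    by_contra hns
    apply cd_aux_top L Φ hdeg horth hnonzero s hns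
    have hdegs : s.natDegree ≤ n + 1 := by
      rw [natDegree_le_iff_coeff_eq_zero]
      intro i hi
      obtain ⟨i', rfl⟩ : ∃ i', i = i' + 1 := ⟨i - 1, by omega⟩
      rw [hs, coeff_sub, coeff_add, coeff_add, coeff_C_mul, coeff_C_mul, coeff_C_mul,
        coeff_X_mul]
      rcases eq_or_ne i' (n + 1) with rfl | h
      · rw [hcoeff (n+1), show (Φ (n+2)).coeff (n+2) = (Φ (n+2)).leadingCoeff from
          hcoeff (n+2), ha, div_mul_cancel₀ _ (hlead (n+2)),
          coeff_eq_zero_of_natDegree_lt (by rw [hdeg]; omega),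
          coeff_eq_zero_of_natDegree_lt (by rw [hdeg]; omega)]
        ring
      · rw [coeff_eq_zero_of_natDegree_lt (by rw [hdeg]; omega),
          coeff_eq_zero_of_natDegree_lt (by rw [hdeg]; omega),
          coeff_eq_zero_of_natDegree_lt (by rw [hdeg]; omega),
          coeff_eq_zero_of_natDegree_lt (by rw [hdeg]; omega)]
        ring
    have hj : ∀ j, j ≤ n + 1 → L (Φ j * s) = 0 := by
      intro j hjle
      have hexp : Φ j * s = Φ j * (X * Φ (n+1))
          - (C a * (Φ j * Φ (n+2)) + C b * (Φ j * Φ (n+1)) + C c * (Φ j * Φ n)) := by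
        rw [hs]; ring
      rw [hexp, map_sub, map_add, map_add, cd_aux_LC, cd_aux_LC, cd_aux_LC,
        horth j (n+2) (by omega)]
      rcases eq_or_ne j (n + 1) with h | hj1
      · rw [h,horth (n+1) n (by omega),
          show Φ (n+1) * (X * Φ (n+1)) = X * Φ (n+1) * Φ (n+1) from by ring,
          show L (Φ (n+1) * Φ (n+1)) = L (Φ (n+1) ^ 2) from by rw [sq],
          hb, div_mul_cancel₀ _ (hnonzero (n+1))]
        ring
      rcases eq_or_ne j n with h | hj2
      · rw [h,horth n (n+1) (by omega),
          show Φ n * (X * Φ (n+1)) = X * Φ (n+1) * Φ n from by ring,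
          show L (Φ n * Φ n) = L (Φ n ^ 2) from by rw [sq],
          hc, div_mul_cancel₀ _ (hnonzero n)]
        ring
      · rw [horth j (n+1) hj1, horth j n hj2,
          show Φ j * (X * Φ (n+1)) = Φ (n+1) * (X * Φ j) from by ring,
          cd_aux_orth_small L Φ hdeg horth hnonzero (j+1) (X * Φ j)
            (le_trans (natDegree_mul_le) (by rw [natDegree_X, hdeg]; omega)) (n+1) (by omega)]
        ring
    exact hj _ hdegs
  exact sub_eq_zero.mp hzero

lemma cd_aux_cross (L : Polynomial ℂ →ₗ[ℂ] ℂ) (Φ : ℕ → Polynomial ℂ)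
    (hdeg : ∀ l, (Φ l).natDegree = l)
    (horth : ∀ l m, l ≠ m → L (Φ l * Φ m) = 0)
    (hnonzero : ∀ l, L (Φ l ^ 2) ≠ 0) (n : ℕ) :
    L (X * Φ (n + 1) * Φ n)
      = ((Φ n).leadingCoeff / (Φ (n + 1)).leadingCoeff) * L (Φ (n + 1) ^ 2) := by
  have hcomm : X * Φ (n + 1) * Φ n = X * Φ n * Φ (n + 1) := by ring
  rw [hcomm]
  cases n with
  | zero =>
    rw [show X * Φ 0 * Φ 1 = (X * Φ 0) * Φ 1 from by ring,
      cd_aux_rec0 L Φ hdeg horth hnonzero]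
    rw [show (C ((Φ 0).leadingCoeff / (Φ 1).leadingCoeff) * Φ 1
        + C (L (X * Φ 0 * Φ 0) / L (Φ 0 ^ 2)) * Φ 0) * Φ 1
      = C ((Φ 0).leadingCoeff / (Φ 1).leadingCoeff) * Φ 1 ^ 2
        + C (L (X * Φ 0 * Φ 0) / L (Φ 0 ^ 2)) * (Φ 0 * Φ 1) from by ring,
      map_add, cd_aux_LC, cd_aux_LC, horth 0 1 (by omega), mul_zero, add_zero]
  | succ m =>
    rw [show X * Φ (m+1) * Φ (m+2) = (X * Φ (m+1)) * Φ (m+2) from by ring,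
      cd_aux_recS L Φ hdeg horth hnonzero m]
    rw [show (C ((Φ (m+1)).leadingCoeff / (Φ (m+2)).leadingCoeff) * Φ (m+2)
        + C (L (X * Φ (m+1) * Φ (m+1)) / L (Φ (m+1) ^ 2)) * Φ (m+1)
        + C (L (X * Φ (m+1) * Φ m) / L (Φ m ^ 2)) * Φ m) * Φ (m+2)
      = C ((Φ (m+1)).leadingCoeff / (Φ (m+2)).leadingCoeff) * Φ (m+2) ^ 2
        + C (L (X * Φ (m+1) * Φ (m+1)) / L (Φ (m+1) ^ 2)) * (Φ (m+1) * Φ (m+2))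
        + C (L (X * Φ (m+1) * Φ m) / L (Φ m ^ 2)) * (Φ m * Φ (m+2)) from by ring,
      map_add, map_add, cd_aux_LC, cd_aux_LC, cd_aux_LC,
      horth (m+1) (m+2) (by omega), horth m (m+2) (by omega), mul_zero, mul_zero,
      add_zero, add_zero]

open Polynomial Finset in
/-- Christoffel–Darboux formula: for a family `(Φ_l)` of orthogonal polynomials for the
moment functional `L` with `h_l = L(Φ_l²)` and leading coefficients `k_l`, the
Christoffel–Darboux kernel `∑_{n=0}^l (h_l/h_n) Φ_n(x) Φ_n(y)` equals
`(k_l / k_{l+1}) · (Φ_{l+1}(x) Φ_l(y) - Φ_l(x) Φ_{l+1}(y)) / (x - y)`. -/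
theorem christoffel_darboux (L : Polynomial ℂ →ₗ[ℂ] ℂ) (Φ : ℕ → Polynomial ℂ)
    (hdeg : ∀ l, (Φ l).natDegree = l)
    (horth : ∀ l m, l ≠ m → L (Φ l * Φ m) = 0)
    (hnonzero : ∀ l, L (Φ l ^ 2) ≠ 0)
    (l : ℕ) (x y : ℂ) (hxy : x ≠ y) :
    ∑ n ∈ Finset.range (l + 1),
        (L (Φ l ^ 2) / L (Φ n ^ 2)) * (Φ n).eval x * (Φ n).eval y
      = ((Φ l).leadingCoeff / (Φ (l + 1)).leadingCoeff) *
        (((Φ (l + 1)).eval x * (Φ l).eval y - (Φ l).eval x * (Φ (l + 1)).eval y)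
          / (x - y)) := by
  have hxy' : x - y ≠ 0 := sub_ne_zero.mpr hxy
  -- evaluated recurrence, n = 0
  have hev0 : ∀ t : ℂ, t * (Φ 0).eval t
      = ((Φ 0).leadingCoeff / (Φ 1).leadingCoeff) * (Φ 1).eval t
        + (L (X * Φ 0 * Φ 0) / L (Φ 0 ^ 2)) * (Φ 0).eval t := by
    intro t
    have := congrArg (Polynomial.eval t) (cd_aux_rec0 L Φ hdeg horth hnonzero)
    simpa [eval_add, eval_mul, eval_C, eval_X] using this
  -- evaluated recurrence, n + 1, with the cross coefficient rewritten
  have hevS : ∀ (n : ℕ) (t : ℂ), t * (Φ (n+1)).eval t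
      = ((Φ (n+1)).leadingCoeff / (Φ (n+2)).leadingCoeff) * (Φ (n+2)).eval t
        + (L (X * Φ (n+1) * Φ (n+1)) / L (Φ (n+1) ^ 2)) * (Φ (n+1)).eval t
        + ((Φ n).leadingCoeff / (Φ (n+1)).leadingCoeff * L (Φ (n+1) ^ 2)
            / L (Φ n ^ 2)) * (Φ n).eval t := by
    intro n t
    have hr := cd_aux_recS L Φ hdeg horth hnonzero n
    rw [cd_aux_cross L Φ hdeg horth hnonzero n] at hr
    have := congrArg (Polynomial.eval t) hr
    simpa [eval_add, eval_mul, eval_C, eval_X] using this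
  -- the Christoffel-Darboux step identity
  have keyn : ∀ n : ℕ, (x - y) * ((Φ (n+1)).eval x * (Φ (n+1)).eval y)
      = ((Φ (n+1)).leadingCoeff / (Φ (n+2)).leadingCoeff)
          * ((Φ (n+2)).eval x * (Φ (n+1)).eval y - (Φ (n+1)).eval x * (Φ (n+2)).eval y)
        - ((Φ n).leadingCoeff / (Φ (n+1)).leadingCoeff * L (Φ (n+1) ^ 2) / L (Φ n ^ 2))
          * ((Φ (n+1)).eval x * (Φ n).eval y - (Φ n).eval x * (Φ (n+1)).eval y) := by
    intro n
    linear_combination ((Φ (n+1)).eval y) * hevS n x - ((Φ (n+1)).eval x) * hevS n y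
  -- main identity by induction
  have main : ∀ m : ℕ, (x - y) * ∑ n ∈ Finset.range (m + 1),
        (1 / L (Φ n ^ 2)) * (Φ n).eval x * (Φ n).eval y
      = ((Φ m).leadingCoeff / (Φ (m+1)).leadingCoeff / L (Φ m ^ 2))
          * ((Φ (m+1)).eval x * (Φ m).eval y - (Φ m).eval x * (Φ (m+1)).eval y) := by
    intro m
    induction m with
    | zero =>
      rw [Finset.sum_range_one]
      linear_combination ((Φ 0).eval y / L (Φ 0 ^ 2)) * hev0 x
        - ((Φ 0).eval x / L (Φ 0 ^ 2)) * hev0 y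
    | succ m ih =>
      rw [Finset.sum_range_succ]
      linear_combination ih + (1 / L (Φ (m+1) ^ 2)) * keyn m
        - ((Φ m).leadingCoeff / (Φ (m+1)).leadingCoeff / L (Φ m ^ 2)
            * ((Φ (m+1)).eval x * (Φ m).eval y - (Φ m).eval x * (Φ (m+1)).eval y))
          * mul_inv_cancel₀ (hnonzero (m+1))
  have hsum : ∑ n ∈ Finset.range (l + 1),
        (L (Φ l ^ 2) / L (Φ n ^ 2)) * (Φ n).eval x * (Φ n).eval y
      = L (Φ l ^ 2) * ∑ n ∈ Finset.range (l + 1),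
          (1 / L (Φ n ^ 2)) * (Φ n).eval x * (Φ n).eval y := by
    rw [Finset.mul_sum]
    exact Finset.sum_congr rfl fun n _ => by ring
  rw [hsum]
  linear_combination (L (Φ l ^ 2) / (x - y)) * main l
    - (L (Φ l ^ 2) * ∑ n ∈ Finset.range (l + 1),
        (1 / L (Φ n ^ 2)) * (Φ n).eval x * (Φ n).eval y) * mul_inv_cancel₀ hxy'
    + ((Φ l).leadingCoeff / (Φ (l+1)).leadingCoeff / (x - y)
        * ((Φ (l+1)).eval x * (Φ l).eval y - (Φ l).eval x * (Φ (l+1)).eval y))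
      * mul_inv_cancel₀ (hnonzero l)
end

section
/- For every integer j ≥ 0, the contour integral of z^j·e^{−2/z} over the unit circle (traversed once counterclockwise) equals 2π√−1·(−2)^{j+1}/(j+1)!; equivalently, −(1/(4π√−1))·∮_{|z|=1} z^j e^{−2/z} dz = (−2)^j/(j+1)!. -/
open Complex Real

lemma circle_zpow_int (m : ℤ) :
    (∮ z in C(0, 1), z ^ m) = if m = -1 then 2 * (π : ℂ) * I else 0 := by
  split_ifs with h
  · subst h
    have : (∮ z in C(0, (1:ℝ)), ((z : ℂ) - 0)⁻¹) = 2 * (π : ℂ) * I :=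
      circleIntegral.integral_sub_inv_of_mem_ball (by simp)
    simpa using this
  · have := circleIntegral.integral_sub_zpow_of_ne h 0 0 1
    simpa using this

lemma exp_hasSum (z : ℂ) (hz : z ≠ 0) (j : ℕ) :
    HasSum (fun n : ℕ => ((-2 : ℂ) ^ n / (n.factorial : ℂ)) * z ^ ((j : ℤ) - n))
      (z ^ j * Complex.exp (-2 / z)) := by
  have h := NormedSpace.expSeries_div_hasSum_exp (-2 / z)
  rw [← Complex.exp_eq_exp_ℂ] at h
  have h2 := h.mul_left ((z : ℂ) ^ j)
  convert h2 using 2 with n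
  case e'_3 => rfl
  rw [div_pow, zpow_sub₀ hz]
  field_simp
  simp only [zpow_natCast]
  ring

lemma key (j : ℕ) :
    (∮ z in C(0, 1), z ^ j * Complex.exp (-2 / z))
      = 2 * (π : ℂ) * I * ((-2 : ℂ) ^ (j + 1) / ((j + 1).factorial : ℂ)) := by
  have hsum : HasSum
      (fun n : ℕ => ∮ z in C(0, 1), ((-2 : ℂ) ^ n / (n.factorial : ℂ)) * z ^ ((j : ℤ) - n))
      (∮ z in C(0, 1), z ^ j * Complex.exp (-2 / z)) := by
    simp only [circleIntegral]
    refine intervalIntegral.hasSum_integral_of_dominated_convergence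
      (fun n _ => (2 : ℝ) ^ n / n.factorial) (fun n => ?_) (fun n => ?_) ?_ ?_ ?_
    · apply Continuous.aestronglyMeasurable
      simp only [deriv_circleMap]
      exact ((continuous_circleMap 0 1).mul continuous_const).smul
        (continuous_const.mul (Continuous.zpow₀ (continuous_circleMap 0 1) _
          (fun θ => Or.inl (circleMap_ne_center one_ne_zero))))
    · filter_upwards with θ
      simp only [deriv_circleMap, norm_smul, norm_mul, map_mul, Complex.norm_I,
        mul_one, norm_circleMap_zero, one_mul, norm_div, norm_pow, norm_zpow, norm_neg,
        Complex.norm_two, Complex.norm_natCast, one_zpow]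
      intro _
      norm_num
    · filter_upwards with θ _
      exact Real.summable_pow_div_factorial 2
    · exact intervalIntegrable_const
    · filter_upwards with θ _
      exact ((exp_hasSum _ (circleMap_ne_center one_ne_zero) j)).const_smul _
  have hsingle : HasSum
      (fun n : ℕ => ∮ z in C(0, 1), ((-2 : ℂ) ^ n / (n.factorial : ℂ)) * z ^ ((j : ℤ) - n))
      (2 * (π : ℂ) * I * ((-2 : ℂ) ^ (j + 1) / ((j + 1).factorial : ℂ))) := by
    have heq : ∀ n : ℕ, (∮ z in C(0, 1), ((-2 : ℂ) ^ n / (n.factorial : ℂ)) * z ^ ((j : ℤ) - n))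
        = ((-2 : ℂ) ^ n / (n.factorial : ℂ)) * (if ((j : ℤ) - n) = -1 then 2 * (π : ℂ) * I else 0) := by
      intro n
      rw [circleIntegral.integral_const_mul, circle_zpow_int]
    have hne : ∀ n : ℕ, n ≠ j + 1 → (((j : ℤ) - n) = -1) = False := by
      intro n hn
      simp only [eq_iff_iff, iff_false]
      omega
    have := hasSum_single (f := fun n : ℕ =>
        ((-2 : ℂ) ^ n / (n.factorial : ℂ)) * (if ((j : ℤ) - n) = -1 then 2 * (π : ℂ) * I else 0)) (j + 1)
      (by intro n hn; simp [hne n hn])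
    simp only [heq]
    convert this using 1
    have h1 : ((j : ℤ) - ((j + 1 : ℕ) : ℤ)) = -1 := by push_cast; ring
    simp only [h1, if_true, if_pos]
    ring
  exact hsum.unique hsingle

/-- The moments of the Bessel weight: for every `j ≥ 0`,
`∮_{|z|=1} z^j e^{-2/z} dz = 2π√-1 · (-2)^{j+1}/(j+1)!`; equivalently,
`-(1/(4π√-1)) ∮_{|z|=1} z^j e^{-2/z} dz = (-2)^j/(j+1)!`. -/
theorem bessel_weight_moments (j : ℕ) :
    (∮ z in C(0, 1), z ^ j * Complex.exp (-2 / z))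
        = 2 * (Real.pi : ℂ) * Complex.I *
          ((-2 : ℂ) ^ (j + 1) / (Nat.factorial (j + 1) : ℂ)) ∧
    -(1 / (4 * (Real.pi : ℂ) * Complex.I)) *
        (∮ z in C(0, 1), z ^ j * Complex.exp (-2 / z))
      = (-2 : ℂ) ^ j / (Nat.factorial (j + 1) : ℂ) := by
  have h := key j
  refine ⟨h, ?_⟩
  rw [h]
  have hπ : (π : ℂ) ≠ 0 := by exact_mod_cast Real.pi_ne_zero
  have hf : ((j + 1).factorial : ℂ) ≠ 0 := by exact_mod_cast Nat.factorial_ne_zero (j + 1)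
  field_simp
  ring
end

section
/- Complex numbers x₁, x₂ and complex numbers z₁, z₂ with |z₁| = |z₂| = 1 satisfy x₁·z₁^j + x₂·z₂^j = (−2)^j/(j+1)! for every integer 0 ≤ j ≤ 2 if and only if, up to simultaneously swapping the indices 1 and 2, one has z₁ = (−5 + √−11)/6, z₂ = (−5 − √−11)/6, x₁ = (11 + √−11)/22, x₂ = (11 − √−11)/22. In particular, there exists a unique quadrature formula of degree 2 for the Bessel weight with 2 nodes on S¹ ⊂ ℂ. -/
/-- Uniqueness of the quadrature formula of degree 2 for the Bessel weight with 2 nodes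
on `S¹ ⊂ ℂ`: weights `x₁, x₂` and nodes `z₁, z₂` of modulus 1 satisfy the quadrature
equations up to degree 2 if and only if, up to swapping indices,
`z₁ = (-5 + √-11)/6`, `z₂ = (-5 - √-11)/6`, `x₁ = (11 + √-11)/22`, `x₂ = (11 - √-11)/22`. -/
theorem bessel_quadrature_deg2_unique (x₁ x₂ z₁ z₂ : ℂ)
    (h₁ : ‖z₁‖ = 1) (h₂ : ‖z₂‖ = 1) :
    (∀ j : ℕ, j ≤ 2 →
        x₁ * z₁ ^ j + x₂ * z₂ ^ j = (-2 : ℂ) ^ j / (Nat.factorial (j + 1) : ℂ)) ↔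
    ((z₁ = (-5 + (Real.sqrt 11 : ℂ) * Complex.I) / 6 ∧
      z₂ = (-5 - (Real.sqrt 11 : ℂ) * Complex.I) / 6 ∧
      x₁ = (11 + (Real.sqrt 11 : ℂ) * Complex.I) / 22 ∧
      x₂ = (11 - (Real.sqrt 11 : ℂ) * Complex.I) / 22) ∨
     (z₂ = (-5 + (Real.sqrt 11 : ℂ) * Complex.I) / 6 ∧
      z₁ = (-5 - (Real.sqrt 11 : ℂ) * Complex.I) / 6 ∧
      x₂ = (11 + (Real.sqrt 11 : ℂ) * Complex.I) / 22 ∧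
      x₁ = (11 - (Real.sqrt 11 : ℂ) * Complex.I) / 22)) := by
  set w : ℂ := (Real.sqrt 11 : ℂ) * Complex.I with hwdef
  have hw : w ^ 2 = -11 := by
    have h11 : ((Real.sqrt 11 : ℝ) : ℂ) ^ 2 = 11 := by
      norm_cast
      exact Real.sq_sqrt (by norm_num)
    rw [hwdef, mul_pow, Complex.I_sq, h11]; ring
  constructor
  · intro h
    have e0 := h 0 (by norm_num)
    have e1 := h 1 (by norm_num)
    have e2 := h 2 (by norm_num)
    norm_num [Nat.factorial] at e0 e1 e2
    have u₁ : z₁ * (starRingEnd ℂ) z₁ = 1 := by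
      have hn : Complex.normSq z₁ = 1 := by
        rw [Complex.normSq_eq_norm_sq, h₁]; norm_num
      rw [Complex.mul_conj, hn, Complex.ofReal_one]
    have u₂ : z₂ * (starRingEnd ℂ) z₂ = 1 := by
      have hn : Complex.normSq z₂ = 1 := by
        rw [Complex.normSq_eq_norm_sq, h₂]; norm_num
      rw [Complex.mul_conj, hn, Complex.ofReal_one]
    have key : z₁ + z₂ + z₁ * z₂ = -2/3 := by
      linear_combination (z₁ + z₂) * e1 - e2 - z₁ * z₂ * e0
    have key2 : (starRingEnd ℂ) z₁ + (starRingEnd ℂ) z₂ +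
        (starRingEnd ℂ) z₁ * (starRingEnd ℂ) z₂ = -2/3 := by
      have := congrArg (starRingEnd ℂ) key
      simpa [map_div₀, map_neg, map_ofNat] using this
    have g : z₁ + z₂ + 1 = -2/3 * (z₁ * z₂) := by
      linear_combination z₁ * z₂ * key2 - (z₂ + z₂ * (starRingEnd ℂ) z₂) * u₁ - (z₁ + 1) * u₂
    have hp : z₁ * z₂ = 1 := by linear_combination 3 * key - 3 * g
    have hs : z₁ + z₂ = -5/3 := by linear_combination key - hp
    have hd : (z₁ - z₂) ^ 2 = -11/9 := by
      linear_combination (z₁ + z₂ - 5/3) * hs - 4 * hp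
    have hfac : (3 * (z₁ - z₂) - w) * (3 * (z₁ - z₂) + w) = 0 := by
      linear_combination 9 * hd - hw
    rcases mul_eq_zero.mp hfac with hc | hc
    · left
      have hc' : 3 * (z₁ - z₂) - w = 0 := hc
      have hz₁ : z₁ = (-5 + w) / 6 := by linear_combination hs / 2 + hc' / 6
      have hz₂ : z₂ = (-5 - w) / 6 := by linear_combination hs / 2 - hc' / 6
      have h22 : 2 * x₁ * w = w - 1 := by
        linear_combination 6 * e1 - 6 * x₁ * hz₁ - 6 * x₂ * hz₂ + (w + 5) * e0
      have hx₁ : x₁ = (11 + w) / 22 := by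
        linear_combination (-w/22) * h22 + ((2 * x₁ - 1)/22) * hw
      have hx₂ : x₂ = (11 - w) / 22 := by linear_combination e0 - hx₁
      exact ⟨hz₁, hz₂, hx₁, hx₂⟩
    · right
      have hc' : 3 * (z₁ - z₂) + w = 0 := hc
      have hz₁ : z₁ = (-5 - w) / 6 := by linear_combination hs / 2 + hc' / 6
      have hz₂ : z₂ = (-5 + w) / 6 := by linear_combination hs / 2 - hc' / 6
      have h22 : 2 * x₂ * w = w - 1 := by
        linear_combination 6 * e1 - 6 * x₁ * hz₁ - 6 * x₂ * hz₂ + (w + 5) * e0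
      have hx₂ : x₂ = (11 + w) / 22 := by
        linear_combination (-w/22) * h22 + ((2 * x₂ - 1)/22) * hw
      have hx₁ : x₁ = (11 - w) / 22 := by linear_combination e0 - hx₂
      exact ⟨hz₂, hz₁, hx₂, hx₁⟩
  · rintro (⟨hz₁, hz₂, hx₁, hx₂⟩ | ⟨hz₂, hz₁, hx₂, hx₁⟩) <;>
    · intro j hj
      interval_cases j <;> norm_num [Nat.factorial, hz₁, hz₂, hx₁, hx₂] <;>
        first
          | ring1
          | linear_combination hw / 66
          | linear_combination hw / 396
end

section
/- There do not exist complex numbers x₁, x₂, x₃ and pairwise distinct complex numbers z₁, z₂, z₃ lying in ℚ(√−11) with |z₁| = |z₂| = |z₃| = 1 such that ∑_{i=1}^{3} x_i·z_i^j = (−2)^j/(j+1)! for every integer 0 ≤ j ≤ 3. (Equivalently: there is no quadrature formula of degree 3 for the Bessel weight with 3 nodes on ℚ(√−11) ∩ S¹.) -/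
/-! Auxiliary lemmas for the Bessel quadrature impossibility theorem. -/

local notation "v" => padicValRat 11


private lemma fact11 : Fact (Nat.Prime 11) := ⟨by norm_num⟩

attribute [local instance] fact11

private lemma vnat (n : ℕ) (h : ¬ 11 ∣ n) : v (n : ℚ) = 0 := by
  rw [padicValRat.of_nat, padicValNat.eq_zero_of_not_dvd h]; rfl

private lemma v11 : v (11 : ℚ) = 1 := by
  simpa using padicValRat.self (p := 11) (by norm_num)

private lemma v19 : v (19 : ℚ) = 0 := by
  simpa using vnat 19 (by norm_num)

private lemma v3 : v (3 : ℚ) = 0 := by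
  simpa using vnat 3 (by norm_num)

private lemma no19 (x : ℚ) : 11 * x ^ 2 ≠ 19 := by
  intro h
  have hx : x ≠ 0 := by rintro rfl; norm_num at h
  have := congrArg v h
  rw [padicValRat.mul (by norm_num) (pow_ne_zero _ hx), padicValRat.pow x, v11, v19] at this
  omega

private lemma no3 (x : ℚ) : 44 * x ^ 2 ≠ 3 := by
  intro h
  have hx : x ≠ 0 := by rintro rfl; norm_num at h
  have h44 : v (44 : ℚ) = 1 := by
    have : (44 : ℚ) = 11 * 4 := by norm_num
    rw [this, padicValRat.mul (by norm_num) (by norm_num), v11]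
    simpa using vnat 4 (by norm_num)
  have := congrArg v h
  rw [padicValRat.mul (by norm_num) (pow_ne_zero _ hx), padicValRat.pow x, h44, v3] at this
  omega

private lemma key_sorted (r1 r2 r3 : ℚ) (h1 : r1 ≠ 0) (h2 : r2 ≠ 0) (h3 : r3 ≠ 0)
    (h12 : v r1 ≤ v r2) (h23 : v r2 ≤ v r3)
    (e1 : 11 * (r1 * r2 + r1 * r3 + r2 * r3) = -19)
    (e2 : 3 * (r1 + r2 + r3) = -(11 * (r1 * r2 * r3))) : False := by
  have t12 : v (r1 * r2) = v r1 + v r2 := padicValRat.mul h1 h2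
  have t13 : v (r1 * r3) = v r1 + v r3 := padicValRat.mul h1 h3
  have t23 : v (r2 * r3) = v r2 + v r3 := padicValRat.mul h2 h3
  have tprod : v (r1 * r2 * r3) = v r1 + v r2 + v r3 := by
    rw [padicValRat.mul (mul_ne_zero h1 h2) h3, t12]
  -- q2 facts
  have hq2ne : r1 * r2 + r1 * r3 + r2 * r3 ≠ 0 := by
    intro h; rw [h] at e1; norm_num at e1
  have hq2val : v (r1 * r2 + r1 * r3 + r2 * r3) = -1 := by
    have := congrArg v e1
    rw [padicValRat.mul (by norm_num) hq2ne, v11] at this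
    rw [show ((-19 : ℚ)) = -(19 : ℚ) by norm_num, padicValRat.neg, v19] at this
    omega
  -- lower bound : v q2 ≥ v r1 + v r2
  have hq2lb : v r1 + v r2 ≤ v (r1 * r2 + r1 * r3 + r2 * r3) := by
    have hassoc : r1 * r2 + r1 * r3 + r2 * r3 = r1 * r2 + (r1 * r3 + r2 * r3) := by ring
    rw [hassoc] at hq2val hq2ne ⊢
    by_cases hz : r1 * r3 + r2 * r3 = 0
    · rw [hz, add_zero, t12]
    · have hmin := padicValRat.min_le_padicValRat_add (p := 11) hq2ne
      have hmin2 := padicValRat.min_le_padicValRat_add (p := 11) hz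
      rw [t13, t23] at hmin2
      rw [t12] at hmin
      omega
  have hk1 : 2 * v r1 ≤ -1 := by omega
  -- q1 nonzero
  have hq1ne : r1 + r2 + r3 ≠ 0 := by
    intro h; rw [h] at e2
    have : r1 * r2 * r3 = 0 := by linarith
    rcases mul_eq_zero.1 this with h | h
    · rcases mul_eq_zero.1 h with h | h
      exacts [h1 h, h2 h]
    · exact h3 h
  have hq1val : v (3 * (r1 + r2 + r3)) = v r1 + v r2 + v r3 + 1 := by
    rw [e2, padicValRat.neg, padicValRat.mul (by norm_num)
      (mul_ne_zero (mul_ne_zero h1 h2) h3), v11, tprod]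
    omega
  have hq1val' : v (r1 + r2 + r3) = v r1 + v r2 + v r3 + 1 := by
    rw [padicValRat.mul (by norm_num : (3:ℚ) ≠ 0) hq1ne, v3] at hq1val
    omega
  rcases lt_or_eq_of_le h12 with hlt12 | heq12
  · -- case v r1 < v r2 : v q1 = v r1
    have hvq1 : v (r1 + r2 + r3) = v r1 := by
      have hassoc : r1 + r2 + r3 = r1 + (r2 + r3) := by ring
      rw [hassoc] at hq1ne ⊢
      by_cases hz : r2 + r3 = 0
      · rw [hz, add_zero]
      · have hmin2 := padicValRat.min_le_padicValRat_add (p := 11) hz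
        have hne : v r1 ≠ v (r2 + r3) := by omega
        rw [padicValRat.add_eq_min hq1ne h1 hz hne]
        omega
    have h23sum : v r2 + v r3 = -1 := by omega
    have h23lt : v r2 < v r3 := by omega
    -- exact value of v q2 = v r1 + v r2
    have hsumz : r1 * r3 + r2 * r3 ≠ 0 := by
      intro h
      have h' : (r1 + r2) * r3 = 0 := by linarith
      have : r2 = -r1 := by
        rcases mul_eq_zero.1 h' with h'' | h''
        · linarith
        · exact absurd h'' h3
      rw [this, padicValRat.neg] at hlt12
      omega
    have hv2 : v (r1 * r3 + r2 * r3) = v r1 + v r3 := by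
      rw [padicValRat.add_eq_min hsumz (mul_ne_zero h1 h3) (mul_ne_zero h2 h3)
        (by rw [t13, t23]; omega), t13, t23]
      omega
    have hassoc : r1 * r2 + r1 * r3 + r2 * r3 = r1 * r2 + (r1 * r3 + r2 * r3) := by ring
    rw [hassoc] at hq2val hq2ne
    rw [padicValRat.add_eq_min hq2ne (mul_ne_zero h1 h2) hsumz
      (by rw [t12, hv2]; omega), t12, hv2] at hq2val
    omega
  · -- case v r1 = v r2
    rcases lt_or_eq_of_le h23 with hlt23 | heq23
    · -- v r2 < v r3 : v q2 = v r1 + v r2, parity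
      have hassoc : r1 * r2 + r1 * r3 + r2 * r3 = r1 * r2 + (r1 * r3 + r2 * r3) := by ring
      rw [hassoc] at hq2val hq2ne
      by_cases hz : r1 * r3 + r2 * r3 = 0
      · rw [hz, add_zero, t12] at hq2val
        omega
      · have hmin2 := padicValRat.min_le_padicValRat_add (p := 11) hz
        rw [t13, t23] at hmin2
        rw [padicValRat.add_eq_min hq2ne (mul_ne_zero h1 h2) hz
          (by rw [t12]; omega), t12] at hq2val
        omega
    · -- all valuations equal
      have hq1lb : v r1 ≤ v (r1 + r2 + r3) := by
        have hassoc : r1 + r2 + r3 = r1 + (r2 + r3) := by ring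
        rw [hassoc] at hq1ne ⊢
        by_cases hz : r2 + r3 = 0
        · rw [hz, add_zero]
        · have hmin := padicValRat.min_le_padicValRat_add (p := 11) hq1ne
          have hmin2 := padicValRat.min_le_padicValRat_add (p := 11) hz
          omega
      omega

private lemma key_zero (a b : ℚ) (e1 : 11 * (a * b) = -19) (e2 : 3 * (a + b) = 0) : False := by
  have hb : b = -a := by linarith
  rw [hb] at e1
  exact no19 a (by linarith)

private lemma key_s17 (r1 r2 r3 : ℚ)
    (e1 : 11 * (r1 * r2 + r1 * r3 + r2 * r3) = -19)
    (e2 : 3 * (r1 + r2 + r3) = -(11 * (r1 * r2 * r3))) : False := by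
  by_cases h1 : r1 = 0
  · subst h1
    exact key_zero r2 r3 (by linear_combination e1) (by linear_combination e2)
  by_cases h2 : r2 = 0
  · subst h2
    exact key_zero r1 r3 (by linear_combination e1) (by linear_combination e2)
  by_cases h3 : r3 = 0
  · subst h3
    exact key_zero r1 r2 (by linear_combination e1) (by linear_combination e2)
  rcases le_total (v r1) (v r2) with h12 | h12
  · rcases le_total (v r2) (v r3) with h23 | h23
    · exact key_sorted r1 r2 r3 h1 h2 h3 h12 h23 (by linear_combination e1)
        (by linear_combination e2)
    · rcases le_total (v r1) (v r3) with h13 | h13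
      · exact key_sorted r1 r3 r2 h1 h3 h2 h13 h23 (by linear_combination e1)
          (by linear_combination e2)
      · exact key_sorted r3 r1 r2 h3 h1 h2 h13 h12 (by linear_combination e1)
          (by linear_combination e2)
  · rcases le_total (v r1) (v r3) with h13 | h13
    · exact key_sorted r2 r1 r3 h2 h1 h3 h12 h13 (by linear_combination e1)
        (by linear_combination e2)
    · rcases le_total (v r2) (v r3) with h23 | h23
      · exact key_sorted r2 r3 r1 h2 h3 h1 h23 h13 (by linear_combination e1)
          (by linear_combination e2)
      · exact key_sorted r3 r2 r1 h3 h2 h1 h23 h12 (by linear_combination e1)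
          (by linear_combination e2)

private lemma htt : ((Real.sqrt 11 : ℂ) * Complex.I) ^ 2 = -11 := by
  rw [mul_pow, Complex.I_sq, ← Complex.ofReal_pow, Real.sq_sqrt (by norm_num : (0:ℝ) ≤ 11)]
  norm_num

private lemma ratparts (A B : ℚ)
    (h : (A : ℂ) + (B : ℂ) * (Real.sqrt 11 : ℂ) * Complex.I = 0) : A = 0 ∧ B = 0 := by
  have hre := congrArg Complex.re h
  have him := congrArg Complex.im h
  simp [Complex.add_re, Complex.add_im, Complex.mul_re, Complex.mul_im] at hre him
  exact ⟨hre, him⟩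

private lemma circ (a b : ℚ) (z : ℂ)
    (hz : z = (a : ℂ) + (b : ℂ) * (Real.sqrt 11 : ℂ) * Complex.I)
    (habs : ‖z‖ = 1) : a ^ 2 + 11 * b ^ 2 = 1 := by
  have h2 : Complex.normSq z = 1 := by
    rw [← Complex.sq_norm, habs]; norm_num
  rw [hz] at h2
  simp [Complex.normSq_apply, Complex.add_re, Complex.add_im, Complex.mul_re,
    Complex.mul_im] at h2
  have hs : Real.sqrt 11 * Real.sqrt 11 = 11 := Real.mul_self_sqrt (by norm_num)
  have : (a : ℝ) ^ 2 + 11 * (b : ℝ) ^ 2 = 1 := by nlinarith [h2]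
  exact_mod_cast this

private lemma param (a b : ℚ) (hc : a ^ 2 + 11 * b ^ 2 = 1) (ha : a ≠ -1) :
    ∃ r : ℚ, a * (1 + 11 * r ^ 2) = 1 - 11 * r ^ 2 ∧ b * (1 + 11 * r ^ 2) = 2 * r := by
  have h1a : 1 + a ≠ 0 := fun h => ha (by linarith)
  refine ⟨b / (1 + a), ?_, ?_⟩
  · field_simp
    linear_combination (a + 1) * hc
  · field_simp
    linear_combination b * hc

private lemma node (a b : ℚ) (z : ℂ)
    (hz : z = (a : ℂ) + (b : ℂ) * (Real.sqrt 11 : ℂ) * Complex.I)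
    (habs : ‖z‖ = 1) :
    z = -1 ∨ ∃ r : ℚ,
      z * (1 - (r : ℂ) * ((Real.sqrt 11 : ℂ) * Complex.I))
        = 1 + (r : ℂ) * ((Real.sqrt 11 : ℂ) * Complex.I) := by
  have hc := circ a b z hz habs
  by_cases ha : a = -1
  · left
    have hb : b = 0 := by nlinarith [hc]
    rw [hz, ha, hb]
    push_cast
    ring
  · right
    obtain ⟨r, hra, hrb⟩ := param a b hc ha
    have hD : ((1 + 11 * r ^ 2 : ℚ) : ℂ) ≠ 0 := by
      have : (1 + 11 * r ^ 2 : ℚ) ≠ 0 := by positivity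
      exact_mod_cast this
    refine ⟨r, mul_left_cancel₀ hD ?_⟩
    have hraC : (a : ℂ) * (1 + 11 * (r : ℂ) ^ 2) = 1 - 11 * (r : ℂ) ^ 2 := by
      exact_mod_cast hra
    have hrbC : (b : ℂ) * (1 + 11 * (r : ℂ) ^ 2) = 2 * (r : ℂ) := by
      exact_mod_cast hrb
    rw [hz]
    push_cast
    linear_combination (1 - (r:ℂ) * ((Real.sqrt 11 : ℂ) * Complex.I)) * hraC
      + (((Real.sqrt 11 : ℂ) * Complex.I) - (r:ℂ) * ((Real.sqrt 11 : ℂ) * Complex.I)^2) * hrbC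
      - 2 * (r:ℂ)^2 * htt

private lemma pair (a b a' b' : ℚ) (hc : a ^ 2 + 11 * b ^ 2 = 1)
    (hc' : a' ^ 2 + 11 * b' ^ 2 = 1) (h1 : a + a' = -1) (h2 : b + b' = 0) : False := by
  have ha' : a' = -1 - a := by linarith
  have hb' : b' = -b := by linarith
  rw [ha', hb'] at hc'
  have ha : a = -(1/2) := by linear_combination (1/2) * hc' - (1/2) * hc
  rw [ha] at hc
  exact no3 b (by linear_combination 4 * hc)

open Finset in
/-- There is no quadrature formula of degree 3 for the Bessel weight with 3 nodes on
`ℚ(√-11) ∩ S¹`. -/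
theorem no_bessel_quadrature_deg3_three_nodes_on_Q_sqrt_neg11_S1 :
    ¬ ∃ (x z : Fin 3 → ℂ),
      Function.Injective z ∧
      (∀ i, ∃ a b : ℚ, z i = (a : ℂ) + (b : ℂ) * (Real.sqrt 11 : ℂ) * Complex.I) ∧
      (∀ i, ‖z i‖ = 1) ∧
      (∀ j : ℕ, j ≤ 3 →
        ∑ i, x i * z i ^ j = (-2 : ℂ) ^ j / (Nat.factorial (j + 1) : ℂ)) := by
  rintro ⟨x, z, -, hfield, habs, hquad⟩
  have h0 := hquad 0 (by norm_num)
  have h1 := hquad 1 (by norm_num)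
  have h2 := hquad 2 (by norm_num)
  have h3 := hquad 3 (by norm_num)
  simp only [Fin.sum_univ_three, pow_zero, pow_one, mul_one, Nat.factorial] at h0 h1 h2 h3
  norm_num at h0 h1 h2 h3
  have hA : 1 + 2*(z 0 + z 1 + z 2) + 3*(z 0*z 1 + z 0*z 2 + z 1*z 2) + 3*(z 0*z 1*z 2) = 0 := by
    linear_combination (3 : ℂ)*h3 - 3*(z 0 + z 1 + z 2)*h2 + 3*(z 0*z 1 + z 0*z 2 + z 1*z 2)*h1
      - 3*(z 0*z 1*z 2)*h0
  obtain ⟨a0, b0, hz0⟩ := hfield 0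
  obtain ⟨a1, b1, hz1⟩ := hfield 1
  obtain ⟨a2, b2, hz2⟩ := hfield 2
  have hc0 := circ a0 b0 (z 0) hz0 (habs 0)
  have hc1 := circ a1 b1 (z 1) hz1 (habs 1)
  have hc2 := circ a2 b2 (z 2) hz2 (habs 2)
  rcases node a0 b0 (z 0) hz0 (habs 0) with hm | ⟨r0, hzr0⟩
  · -- z 0 = -1
    have hsum : z 1 + z 2 = -1 := by
      linear_combination -hA + (2 + 3*z 1 + 3*z 2 + 3*z 1*z 2) * hm
    rw [hz1, hz2] at hsum
    have hri := ratparts (a1 + a2 + 1) (b1 + b2) (by push_cast; linear_combination hsum)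
    exact pair a1 b1 a2 b2 hc1 hc2 (by linarith [hri.1]) (by linarith [hri.2])
  rcases node a1 b1 (z 1) hz1 (habs 1) with hm | ⟨r1, hzr1⟩
  · -- z 1 = -1
    have hsum : z 0 + z 2 = -1 := by
      linear_combination -hA + (2 + 3*z 0 + 3*z 2 + 3*z 0*z 2) * hm
    rw [hz0, hz2] at hsum
    have hri := ratparts (a0 + a2 + 1) (b0 + b2) (by push_cast; linear_combination hsum)
    exact pair a0 b0 a2 b2 hc0 hc2 (by linarith [hri.1]) (by linarith [hri.2])
  rcases node a2 b2 (z 2) hz2 (habs 2) with hm | ⟨r2, hzr2⟩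
  · -- z 2 = -1
    have hsum : z 0 + z 1 = -1 := by
      linear_combination -hA + (2 + 3*z 0 + 3*z 1 + 3*z 0*z 1) * hm
    rw [hz0, hz1] at hsum
    have hri := ratparts (a0 + a1 + 1) (b0 + b1) (by push_cast; linear_combination hsum)
    exact pair a0 b0 a1 b1 hc0 hc1 (by linarith [hri.1]) (by linarith [hri.2])
  -- main case: all three nodes parametrized
  have hB : ((19 + 11*(r0*r1 + r0*r2 + r1*r2) : ℚ) : ℂ)
      + ((3*(r0 + r1 + r2) + 11*(r0*r1*r2) : ℚ) : ℂ) * (Real.sqrt 11 : ℂ) * Complex.I = 0 := by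
    push_cast
    set t : ℂ := (Real.sqrt 11 : ℂ) * Complex.I with ht
    set u0 : ℂ := (r0 : ℂ) * t with hu0
    set u1 : ℂ := (r1 : ℂ) * t with hu1
    set u2 : ℂ := (r2 : ℂ) * t with hu2
    linear_combination ((1-u0)*(1-u1)*(1-u2)) * hA
      - ((2 + 3*z 1 + 3*z 2 + 3*z 1*z 2)*(1-u1)*(1-u2)) * hzr0
      - ((2*(1-u0) + 3*(1+u0) + 3*z 2*(1-u0) + 3*z 2*(1+u0))*(1-u2)) * hzr1
      - (2*(1-u0)*(1-u1) + 3*(1+u0)*(1-u1) + 3*(1-u0)*(1+u1) + 3*(1+u0)*(1+u1)) * hzr2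
      + ((r0:ℂ)*(r1:ℂ) + (r0:ℂ)*(r2:ℂ) + (r1:ℂ)*(r2:ℂ) + ((r0:ℂ)*(r1:ℂ)*(r2:ℂ))*t) * htt
  obtain ⟨e1, e2⟩ := ratparts _ _ hB
  exact key_s17 r0 r1 r2 (by linarith) (by linarith)
end
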